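/- arXiv:1607.00414 — 2 statements merged into one kernel-verified Lean document; each statement's English description precedes it below -/
import Mathlib

section
/- Suppose g satisfies: g(0) = 0; g(x) > 0 for all x > 0; g is continuous on [0,∞); g is C¹ on (0,δ₁) with g′(x) > 0 there, for some δ₁ > 0; and g′ ∈ RV_0(β−1) for some β > 1. Let x be a positive continuous function on [0,∞) with x(t) → 0 as t → ∞ and liminf_{t→∞} x(t)/G⁻¹(t) ≥ λ for some λ > 0. Let τ : [0,∞) → [0,∞) be continuous with t − τ(t) → ∞ and τ(t)/t → q ∈ (0,1) as t → ∞, let b > 0, and define φ(t) = b·g(x(t−τ(t))) for t large enough that t − τ(t) ≥ 0. Then liminf_{t→∞} φ(t)/g(G⁻¹(t)) ≥ b·λ^β·(1−q)^{−β/(β−1)}. -/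
open Filter Set Real MeasureTheory

/-- `f` is regularly varying at `0` (from the right) with index `β`. -/
def RVatZero (f : ℝ → ℝ) (β : ℝ) : Prop :=
  ∀ lam : ℝ, 0 < lam →
    Filter.Tendsto (fun y => f (lam * y) / f y) (nhdsWithin 0 (Set.Ioi 0))
      (nhds (lam ^ β))

/-- `G(y) = ∫_y^1 du / g(u)`. -/
noncomputable def Gfun (g : ℝ → ℝ) : ℝ → ℝ := fun y => ∫ u in y..(1:ℝ), 1 / g u

open Topology

namespace Stmt16Aux

/-- Bundled hypotheses on `g`. -/
structure GHyp (g g' : ℝ → ℝ) (β δ₁ : ℝ) : Prop where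
  g0 : g 0 = 0
  pos : ∀ y : ℝ, 0 < y → 0 < g y
  cont : ContinuousOn g (Set.Ici 0)
  dpos₁ : 0 < δ₁
  hd : ∀ y ∈ Set.Ioo (0:ℝ) δ₁, HasDerivAt g (g' y) y
  dcont : ContinuousOn g' (Set.Ioo 0 δ₁)
  dpos : ∀ y ∈ Set.Ioo (0:ℝ) δ₁, 0 < g' y
  βgt : 1 < β
  rv : RVatZero g' (β - 1)

variable {g g' : ℝ → ℝ} {β δ₁ : ℝ}

lemma g_mono (H : GHyp g g' β δ₁) : StrictMonoOn g (Ioo 0 δ₁) := by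
  apply strictMonoOn_of_deriv_pos (convex_Ioo _ _)
  · exact fun y hy => ((H.hd y hy).continuousAt).continuousWithinAt
  · intro y hy
    rw [interior_Ioo] at hy
    rw [(H.hd y hy).deriv]
    exact H.dpos y hy

lemma integrable_inv_g (H : GHyp g g' β δ₁) {a c : ℝ} (ha : 0 < a) (hc : 0 < c) :
    IntervalIntegrable (fun u => 1 / g u) volume a c := by
  apply ContinuousOn.intervalIntegrable
  have hsub : uIcc a c ⊆ Ici 0 := fun u hu => le_trans (le_min ha.le hc.le) hu.1
  apply ContinuousOn.div continuousOn_const (H.cont.mono hsub)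
  intro u hu
  exact (H.pos u (lt_of_lt_of_le (lt_min ha hc) hu.1)).ne'

lemma Gfun_sub (H : GHyp g g' β δ₁) {a c : ℝ} (ha : 0 < a) (hc : 0 < c) :
    Gfun g a - Gfun g c = ∫ u in a..c, 1 / g u := by
  have h1 := intervalIntegral.integral_add_adjacent_intervals
    (integrable_inv_g H ha hc) (integrable_inv_g H hc one_pos)
  unfold Gfun
  linarith [h1]

lemma Gfun_anti (H : GHyp g g' β δ₁) {a c : ℝ} (ha : 0 < a) (hac : a < c) :
    Gfun g c < Gfun g a := by
  have h := Gfun_sub H ha (ha.trans hac)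
  have hpos : 0 < ∫ u in a..c, 1 / g u := by
    apply intervalIntegral.intervalIntegral_pos_of_pos_on (integrable_inv_g H ha (ha.trans hac))
      _ hac
    intro u hu
    exact div_pos one_pos (H.pos u (ha.trans hu.1))
  linarith

lemma Gfun_one : Gfun g 1 = 0 := intervalIntegral.integral_same

lemma Gfun_nonneg (H : GHyp g g' β δ₁) {a : ℝ} (ha : 0 < a) (ha1 : a ≤ 1) :
    0 ≤ Gfun g a := by
  rcases eq_or_lt_of_le ha1 with h | h
  · rw [h, Gfun_one]
  · have := Gfun_anti H ha h
    rw [Gfun_one] at this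
    linarith

lemma uct {m : ℝ → ℝ} {T₁ : ℝ} (hm : ∀ t, T₁ < t → ContinuousAt m t)
    (hconv : ∀ u, 0 ≤ u → Tendsto (fun t => m (t + u) - m t) atTop (𝓝 0))
    {U ε : ℝ} (hU : 0 < U) (hε : 0 < ε) :
    ∃ T : ℝ, ∀ t ≥ T, ∀ u ∈ Icc (0:ℝ) U, |m (t + u) - m t| ≤ ε := by
  set N : ℕ → ℝ := fun n => T₁ + 1 + n with hN
  set E : ℕ → Set ℝ :=
    fun n => ⋂ t ∈ Ici (N n), (Icc 0 (2*U) ∩ {s | |m (t+s) - m t| ≤ ε/2}) with hE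
  have hEsub : ∀ n, E n ⊆ Icc 0 (2*U) := by
    intro n s hs
    have := mem_iInter₂.1 hs (N n) (mem_Ici.2 (le_refl _))
    exact this.1
  have hEmem : ∀ n s, s ∈ E n → ∀ t, N n ≤ t → |m (t+s) - m t| ≤ ε/2 := by
    intro n s hs t ht
    exact (mem_iInter₂.1 hs t ht).2
  have hmono : Monotone E := by
    intro n n' hnn' s hs
    rw [mem_iInter₂]
    intro t ht
    refine mem_iInter₂.1 hs t (mem_Ici.2 (le_trans ?_ (mem_Ici.1 ht)))
    simp only [hN]
    have : (n:ℝ) ≤ n' := Nat.cast_le.2 hnn'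
    linarith
  have hclosed : ∀ n, IsClosed (E n) := by
    intro n
    apply isClosed_biInter
    intro t ht
    have hcont : ContinuousOn (fun s => |m (t+s) - m t|) (Icc 0 (2*U)) := by
      intro s hs
      have hts : T₁ < t + s := by
        have : T₁ + 1 + (n:ℕ) ≤ t := ht
        have hn0 : (0:ℝ) ≤ (n:ℕ) := Nat.cast_nonneg n
        have hs0 : (0:ℝ) ≤ s := hs.1
        linarith
      have h1 : ContinuousAt (fun s => m (t+s)) s :=
        (hm (t+s) hts).comp ((continuous_const.add continuous_id).continuousAt)
      exact (((h1.sub continuousAt_const).abs).continuousWithinAt)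
    have := hcont.preimage_isClosed_of_isClosed isClosed_Icc (isClosed_Iic (a := ε/2))
    convert this using 1
    rfl
  have hunion : ⋃ n, E n = Icc 0 (2*U) := by
    apply Subset.antisymm (iUnion_subset hEsub)
    intro s hs
    have h2 : ∀ᶠ v in 𝓝 (0:ℝ), |v| ≤ ε/2 := by
      filter_upwards [Metric.closedBall_mem_nhds (0:ℝ) (half_pos hε)] with v hv
      simpa [Real.dist_eq] using hv
    have hev := (hconv s hs.1).eventually h2
    rw [eventually_atTop] at hev
    obtain ⟨M, hM⟩ := hev
    obtain ⟨n, hn⟩ := exists_nat_ge (M - (T₁+1))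
    refine mem_iUnion.2 ⟨n, ?_⟩
    rw [mem_iInter₂]
    intro t ht
    have htM : M ≤ t := by
      have : N n = T₁ + 1 + n := rfl
      have h' : N n ≤ t := ht
      linarith
    exact ⟨hs, hM t htM⟩
  have hμ : Tendsto (fun n => volume (E n)) atTop (𝓝 (volume (Icc (0:ℝ) (2*U)))) := by
    have := MeasureTheory.tendsto_measure_iUnion_atTop (μ := volume) hmono
    rwa [hunion] at this
  have hlt : ENNReal.ofReal (3*U/2) < volume (Icc (0:ℝ) (2*U)) := by
    rw [Real.volume_Icc]
    rw [ENNReal.ofReal_lt_ofReal_iff (by linarith)]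
    linarith
  obtain ⟨n, hn⟩ := (hμ.eventually (eventually_gt_nhds hlt)).exists
  -- difference step
  have hdiff : ∀ u ∈ Icc (0:ℝ) U, ∃ e, e ∈ E n ∧ e + u ∈ E n := by
    intro u hu
    set F := (fun s => s + u) ⁻¹' (E n) with hF
    have hEm : MeasurableSet (E n) := (hclosed n).measurableSet
    have hFm : MeasurableSet F := hEm.preimage (measurable_add_const u)
    have hvF : volume F = volume (E n) := measure_preimage_add_right volume u (E n)
    have hsub : E n ∪ F ⊆ Icc (-U) (2*U) := by
      intro s hs
      rcases hs with hs | hs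
      · have := hEsub n hs
        exact ⟨by linarith [this.1], this.2⟩
      · have := hEsub n hs
        constructor
        · have : (0:ℝ) ≤ s + u := this.1
          linarith [hu.2]
        · have h2 : s + u ≤ 2*U := this.2
          linarith [hu.1]
    have hvU : volume (E n ∪ F) ≤ ENNReal.ofReal (3*U) := by
      calc volume (E n ∪ F) ≤ volume (Icc (-U) (2*U)) := measure_mono hsub
        _ = ENNReal.ofReal (2*U - (-U)) := Real.volume_Icc
        _ = ENNReal.ofReal (3*U) := by ring_nf
    have hkey : volume (E n ∩ F) ≠ 0 := by
      intro h0
      have := measure_union_add_inter (μ := volume) (E n) hFm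
      rw [h0, add_zero] at this
      have hgt : ENNReal.ofReal (3*U) < volume (E n) + volume F := by
        have h3 : ENNReal.ofReal (3*U) = ENNReal.ofReal (3*U/2) + ENNReal.ofReal (3*U/2) := by
          rw [← ENNReal.ofReal_add (by linarith) (by linarith)]
          ring_nf
        rw [h3, hvF]
        exact ENNReal.add_lt_add hn hn
      rw [← this] at hgt
      exact absurd hvU (not_le.2 hgt)
    obtain ⟨e, he⟩ := nonempty_of_measure_ne_zero hkey
    exact ⟨e, he.1, he.2⟩
  refine ⟨N n + 2*U, ?_⟩
  intro t ht u hu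
  obtain ⟨e, he, heu⟩ := hdiff u hu
  have heI := hEsub n he
  have hbb : N n ≤ t - e := by
    have := heI.2
    have h2 : N n + 2*U ≤ t := ht
    linarith
  have h1 : |m ((t-e) + (e+u)) - m (t-e)| ≤ ε/2 := hEmem n _ heu (t-e) hbb
  have h2 : |m ((t-e) + e) - m (t-e)| ≤ ε/2 := hEmem n _ he (t-e) hbb
  have e1 : (t-e) + (e+u) = t + u := by ring
  have e2 : (t-e) + e = t := by ring
  rw [e1] at h1
  rw [e2] at h2
  calc |m (t+u) - m t| = |(m (t+u) - m (t-e)) - (m t - m (t-e))| := by ring_nf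
    _ ≤ |m (t+u) - m (t-e)| + |m t - m (t-e)| := abs_sub _ _
    _ ≤ ε/2 + ε/2 := add_le_add h1 h2
    _ = ε := by ring

lemma uct_g' (H : GHyp g g' β δ₁) {ε : ℝ} (hε : 0 < ε) :
    ∃ y₀ : ℝ, 0 < y₀ ∧ y₀ < δ₁ ∧ ∀ y ∈ Ioc (0:ℝ) y₀, ∀ s ∈ Icc (exp (-1)) (1:ℝ),
      |log (g' (s*y)) - log (g' y) - (β-1) * log s| ≤ ε := by
  set m : ℝ → ℝ := fun t => log (g' (exp (-t))) + (β-1)*t with hm_def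
  set T₁ : ℝ := -Real.log δ₁ with hT₁
  have hexp_mem : ∀ t : ℝ, T₁ < t → exp (-t) ∈ Ioo (0:ℝ) δ₁ := by
    intro t ht
    constructor
    · exact exp_pos _
    · have : -t < Real.log δ₁ := by rw [hT₁] at ht; linarith
      calc exp (-t) < exp (Real.log δ₁) := exp_lt_exp.2 this
        _ = δ₁ := Real.exp_log H.dpos₁
  have hm : ∀ t, T₁ < t → ContinuousAt m t := by
    intro t ht
    have h1 : ContinuousAt (fun t : ℝ => exp (-t)) t := by fun_prop
    have h2 : ContinuousAt g' (exp (-t)) :=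
      H.dcont.continuousAt (isOpen_Ioo.mem_nhds (hexp_mem t ht))
    have h4 : g' (exp (-t)) ≠ 0 := (H.dpos _ (hexp_mem t ht)).ne'
    have h3 : Tendsto (fun t : ℝ => g' (exp (-t))) (𝓝 t) (𝓝 (g' (exp (-t)))) :=
      h2.tendsto.comp h1.tendsto
    have h6 : ContinuousAt (fun t : ℝ => log (g' (exp (-t)))) t :=
      (Real.continuousAt_log h4).tendsto.comp h3
    exact h6.add (by fun_prop)
  have hy_tend : Tendsto (fun t : ℝ => exp (-t)) atTop (𝓝[>] (0:ℝ)) := by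
    apply tendsto_nhdsWithin_of_tendsto_nhds_of_eventually_within
    · exact Real.tendsto_exp_atBot.comp tendsto_neg_atTop_atBot
    · exact Eventually.of_forall (fun t => exp_pos _)
  have hconv : ∀ u, 0 ≤ u → Tendsto (fun t => m (t + u) - m t) atTop (𝓝 0) := by
    intro u hu
    set lam : ℝ := exp (-u) with hlam_def
    have hlam0 : 0 < lam := exp_pos _
    have hlam1 : lam ≤ 1 := by
      rw [hlam_def, ← Real.exp_zero]
      exact exp_le_exp.2 (by linarith)
    have h1 := H.rv lam hlam0
    have hne : lam ^ (β-1) ≠ 0 := (rpow_pos_of_pos hlam0 _).ne'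
    have h2 : Tendsto (fun y => log (g' (lam * y) / g' y)) (𝓝[>] (0:ℝ))
        (𝓝 (log (lam ^ (β-1)))) := (Real.continuousAt_log hne).tendsto.comp h1
    have h3 : Tendsto (fun y => log (g' (lam * y)) - log (g' y)) (𝓝[>] (0:ℝ))
        (𝓝 (log (lam ^ (β-1)))) := by
      apply h2.congr'
      filter_upwards [Ioo_mem_nhdsGT_of_mem
        (⟨le_refl (0:ℝ), H.dpos₁⟩ : (0:ℝ) ∈ Ico (0:ℝ) δ₁)] with y hy
      have hy1 : y ∈ Ioo (0:ℝ) δ₁ := hy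
      have hly : lam * y ∈ Ioo (0:ℝ) δ₁ := by
        constructor
        · exact mul_pos hlam0 hy1.1
        · calc lam * y ≤ 1 * y := mul_le_mul_of_nonneg_right hlam1 hy1.1.le
            _ = y := one_mul y
            _ < δ₁ := hy1.2
      exact Real.log_div (H.dpos _ hly).ne' (H.dpos _ hy1).ne'
    have h4 := h3.comp hy_tend
    have h5 : Tendsto (fun t => m (t + u) - m t) atTop
        (𝓝 (log (lam ^ (β-1)) + (β-1)*u)) := by
      have h6 := h4.add_const ((β-1)*u)
      apply h6.congr
      intro t
      simp only [hm_def, Function.comp_def]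
      have he : exp (-(t+u)) = lam * exp (-t) := by
        rw [hlam_def, ← Real.exp_add]; congr 1; ring
      rw [he]; ring
    have hval : log (lam ^ (β-1)) + (β-1)*u = 0 := by
      rw [Real.log_rpow hlam0, hlam_def, Real.log_exp]; ring
    rwa [hval] at h5
  obtain ⟨T, hT⟩ := uct hm hconv (U := 1) (ε := ε) one_pos hε
  set T' : ℝ := max T (T₁ + 1) with hT'
  refine ⟨exp (-T'), exp_pos _, ?_, ?_⟩
  · have : T₁ < T' := lt_of_lt_of_le (by linarith) (le_max_right _ _)
    exact (hexp_mem T' this).2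
  · intro y hy s hs
    set t : ℝ := -Real.log y with ht_def
    set u : ℝ := -Real.log s with hu_def
    have hs0 : (0:ℝ) < s := lt_of_lt_of_le (exp_pos _) hs.1
    have htT : T ≤ t := by
      have : Real.log y ≤ -T' := by
        calc Real.log y ≤ Real.log (exp (-T')) := Real.log_le_log hy.1 hy.2
          _ = -T' := Real.log_exp _
      have : t ≥ T' := by rw [ht_def]; linarith
      exact le_trans (le_max_left _ _) this
    have hu_mem : u ∈ Icc (0:ℝ) 1 := by
      constructor
      · rw [hu_def]
        have : Real.log s ≤ 0 := Real.log_nonpos hs0.le hs.2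
        linarith
      · rw [hu_def]
        have : -1 ≤ Real.log s := by
          calc (-1:ℝ) = Real.log (exp (-1)) := (Real.log_exp _).symm
            _ ≤ Real.log s := Real.log_le_log (exp_pos _) hs.1
        linarith
    have := hT t htT u hu_mem
    have he1 : exp (-t) = y := by rw [ht_def, neg_neg, Real.exp_log hy.1]
    have he2 : exp (-(t+u)) = s * y := by
      rw [show -(t+u) = -u + -t by ring, Real.exp_add, hu_def, neg_neg, he1,
        Real.exp_log hs0]
    have hmm : m (t+u) - m t = log (g' (s*y)) - log (g' y) - (β-1) * log s := by
      simp only [hm_def]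
      rw [he2, he1, hu_def]
      ring
    rwa [hmm] at this

lemma potter (H : GHyp g g' β δ₁) {ε : ℝ} (hε : 0 < ε) :
    ∃ y₀ : ℝ, 0 < y₀ ∧ y₀ < δ₁ ∧ ∀ y ∈ Ioc (0:ℝ) y₀, ∀ s ∈ Ioc (0:ℝ) 1,
      exp (-(2*ε)) * s ^ (β-1+ε) * g' y ≤ g' (s*y) ∧
        g' (s*y) ≤ exp (2*ε) * s ^ (β-1-ε) * g' y := by
  obtain ⟨y₀, hy₀, hy₀δ, hbase⟩ := uct_g' H hε
  have key : ∀ k : ℕ, ∀ s : ℝ, exp (-(k+1):ℝ) ≤ s → s ≤ 1 → ∀ y ∈ Ioc (0:ℝ) y₀,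
      |log (g' (s*y)) - log (g' y) - (β-1) * log s| ≤ (k+1) * ε := by
    intro k
    induction k with
    | zero =>
      intro s hsl hsu y hy
      have := hbase y hy s ⟨by norm_num at hsl ⊢; exact hsl, hsu⟩
      simpa using this
    | succ k ih =>
      intro s hsl hsu y hy
      by_cases hcase : exp (-(k+1):ℝ) ≤ s
      · have := ih s hcase hsu y hy
        have hk : ((k:ℝ)+1) * ε ≤ ((k:ℝ)+1+1) * ε := by nlinarith
        calc |_| ≤ ((k:ℝ)+1) * ε := this
          _ ≤ _ := by push_cast; nlinarith
      · push_neg at hcase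
        set s' : ℝ := s * exp 1 with hs'_def
        have hs0 : 0 < s := lt_of_lt_of_le (exp_pos _) hsl
        have hsl' : exp (-((k:ℝ)+1) + -1) ≤ s := by
          refine le_trans (le_of_eq ?_) hsl
          congr 1
          push_cast
          ring
        have hs'l : exp (-(k+1):ℝ) ≤ s' := by
          rw [hs'_def]
          calc exp (-(k+1):ℝ) = exp (-((k:ℝ)+1) + -1) * exp 1 := by
                rw [← Real.exp_add]; congr 1; ring
            _ ≤ s * exp 1 := mul_le_mul_of_nonneg_right hsl' (exp_pos 1).le
        have hs'u : s' ≤ 1 := by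
          rw [hs'_def]
          calc s * exp 1 ≤ exp (-(k+1):ℝ) * exp 1 :=
                mul_le_mul_of_nonneg_right hcase.le (exp_pos 1).le
            _ = exp (-(k:ℝ)) := by rw [← Real.exp_add]; congr 1; ring
            _ ≤ exp 0 := exp_le_exp.2 (neg_nonpos.2 (Nat.cast_nonneg k))
            _ = 1 := Real.exp_zero
        have hs'0 : 0 < s' := mul_pos hs0 (exp_pos _)
        have hIH := ih s' hs'l hs'u y hy
        have hs'y : s' * y ∈ Ioc (0:ℝ) y₀ := by
          constructor
          · exact mul_pos hs'0 hy.1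
          · calc s' * y ≤ 1 * y := mul_le_mul_of_nonneg_right hs'u hy.1.le
              _ = y := one_mul y
              _ ≤ y₀ := hy.2
        have hbb := hbase (s'*y) hs'y (exp (-1)) ⟨le_refl _, by
          rw [← Real.exp_zero]; exact exp_le_exp.2 (by norm_num)⟩
        have harg : exp (-1) * (s' * y) = s * y := by
          rw [hs'_def]
          rw [show s * exp 1 * y = s * y * exp 1 by ring]
          rw [show exp (-1) * (s * y * exp 1) = s * y * (exp 1 * exp (-1)) by ring]
          rw [← Real.exp_add]
          norm_num
        rw [harg, Real.log_exp] at hbb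
        have hlogs : log s = log s' + (-1) := by
          have : s = s' * exp (-1) := by
            rw [hs'_def, mul_assoc, ← Real.exp_add]; norm_num
          rw [this, Real.log_mul hs'0.ne' (exp_pos _).ne', Real.log_exp]
        have habs : |log (g' (s*y)) - log (g' y) - (β-1) * log s| ≤
            |log (g' (s*y)) - log (g' (s'*y)) - (β-1)*(-1)| +
            |log (g' (s'*y)) - log (g' y) - (β-1) * log s'| := by
          rw [hlogs]
          have : log (g' (s*y)) - log (g' y) - (β-1) * (log s' + (-1)) =
              (log (g' (s*y)) - log (g' (s'*y)) - (β-1)*(-1)) +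
              (log (g' (s'*y)) - log (g' y) - (β-1) * log s') := by ring
          rw [this]
          exact abs_add_le _ _
        calc |log (g' (s*y)) - log (g' y) - (β-1) * log s| ≤ _ := habs
          _ ≤ ε + ((k:ℝ)+1) * ε := add_le_add hbb hIH
          _ = ((k:ℝ)+1+1) * ε := by ring
          _ = (((k+1):ℕ)+1:ℝ) * ε := by push_cast; ring
  refine ⟨y₀, hy₀, hy₀δ, ?_⟩
  intro y hy s hs
  set k : ℕ := ⌈-Real.log s⌉₊ with hk_def
  have hlognn : 0 ≤ -Real.log s := by
    have := Real.log_nonpos hs.1.le hs.2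
    linarith
  have hsl : exp (-(k+1):ℝ) ≤ s := by
    have h1 : -Real.log s ≤ (k:ℝ) := Nat.le_ceil _
    have : (-(k+1):ℝ) ≤ Real.log s := by linarith
    calc exp (-(k+1):ℝ) ≤ exp (Real.log s) := exp_le_exp.2 this
      _ = s := Real.exp_log hs.1
  have hbound := key k s hsl hs.2 y hy
  have hch : ((k:ℝ)+1) * ε ≤ (-Real.log s) * ε + 2*ε := by
    have : (k:ℝ) < -Real.log s + 1 := Nat.ceil_lt_add_one hlognn
    nlinarith
  have hb2 : |log (g' (s*y)) - log (g' y) - (β-1) * log s| ≤ (-Real.log s) * ε + 2*ε :=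
    le_trans hbound hch
  rw [abs_le] at hb2
  have hgy : 0 < g' y := H.dpos y ⟨hy.1, lt_of_le_of_lt hy.2 hy₀δ⟩
  have hsy : 0 < g' (s*y) := by
    apply H.dpos
    constructor
    · exact mul_pos hs.1 hy.1
    · calc s * y ≤ 1 * y := mul_le_mul_of_nonneg_right hs.2 hy.1.le
        _ = y := one_mul y
        _ < δ₁ := lt_of_le_of_lt hy.2 hy₀δ
  constructor
  · have h1 : log (g' y) + (β-1) * log s + Real.log s * ε - 2*ε ≤ log (g' (s*y)) := by
      have := hb2.1; linarith
    calc exp (-(2*ε)) * s ^ (β-1+ε) * g' y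
        = exp (log (g' y) + (β-1) * log s + Real.log s * ε - 2*ε) := by
          rw [show log (g' y) + (β-1) * log s + Real.log s * ε - 2*ε =
            (-(2*ε) + log s * (β-1+ε)) + log (g' y) by ring]
          rw [Real.exp_add, Real.exp_add, Real.exp_log hgy,
            Real.rpow_def_of_pos hs.1]
      _ ≤ exp (log (g' (s*y))) := exp_le_exp.2 h1
      _ = g' (s*y) := Real.exp_log hsy
  · have h1 : log (g' (s*y)) ≤ log (g' y) + (β-1) * log s - Real.log s * ε + 2*ε := by
      have := hb2.2; linarith
    calc g' (s*y) = exp (log (g' (s*y))) := (Real.exp_log hsy).symm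
      _ ≤ exp (log (g' y) + (β-1) * log s - Real.log s * ε + 2*ε) := exp_le_exp.2 h1
      _ = exp (2*ε) * s ^ (β-1-ε) * g' y := by
          rw [show log (g' y) + (β-1) * log s - Real.log s * ε + 2*ε =
            (2*ε + log s * (β-1-ε)) + log (g' y) by ring]
          rw [Real.exp_add, Real.exp_add, Real.exp_log hgy,
            Real.rpow_def_of_pos hs.1]

lemma g_yg' (H : GHyp g g' β δ₁) {ε : ℝ} (hε : 0 < ε) (hεβ : ε < β - 1) :
    ∃ y₀ : ℝ, 0 < y₀ ∧ y₀ < δ₁ ∧ ∀ y ∈ Ioc (0:ℝ) y₀,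
      exp (-(2*ε))/(β+ε) * (y * g' y) ≤ g y ∧ g y ≤ exp (2*ε)/(β-ε) * (y * g' y) := by
  obtain ⟨y₀, h0, hδ, hpot⟩ := potter H hε
  refine ⟨y₀, h0, hδ, ?_⟩
  intro y hy
  have hyδ : y ∈ Ioo (0:ℝ) δ₁ := ⟨hy.1, lt_of_le_of_lt hy.2 hδ⟩
  have hgy' : 0 < g' y := H.dpos y hyδ
  have hyp : (0:ℝ) < y := hy.1
  set p : ℝ := β - 1 - ε with hp_def
  set p' : ℝ := β - 1 + ε with hp'_def
  have hp0 : 0 < p := by rw [hp_def]; linarith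
  have hp'0 : 0 < p' := by rw [hp'_def]; linarith
  -- FTC for a ∈ (0, y)
  have hFTC : ∀ a ∈ Ioo (0:ℝ) y, g y - g a = ∫ v in a..y, g' v := by
    intro a ha
    have hsub : Icc a y ⊆ Ioo 0 δ₁ := fun v hv => ⟨lt_of_lt_of_le ha.1 hv.1,
      lt_of_le_of_lt hv.2 hyδ.2⟩
    have huicc : uIcc a y = Icc a y := uIcc_of_le ha.2.le
    have hint : IntervalIntegrable g' volume a y :=
      (H.dcont.mono hsub).intervalIntegrable_of_Icc ha.2.le
    exact (intervalIntegral.integral_eq_sub_of_hasDerivAt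
      (fun v hv => H.hd v (hsub (huicc ▸ hv))) hint).symm
  have hint_g' : ∀ a ∈ Ioo (0:ℝ) y, IntervalIntegrable g' volume a y := by
    intro a ha
    have hsub : Icc a y ⊆ Ioo 0 δ₁ := fun v hv => ⟨lt_of_lt_of_le ha.1 hv.1,
      lt_of_le_of_lt hv.2 hyδ.2⟩
    exact (H.dcont.mono hsub).intervalIntegrable_of_Icc ha.2.le
  have hint_rpow : ∀ (r : ℝ) (a : ℝ), 0 < a → IntervalIntegrable (fun v => v ^ r)
      volume a y := by
    intro r a ha
    apply ContinuousOn.intervalIntegrable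
    apply ContinuousOn.rpow_const continuousOn_id
    intro v hv
    exact Or.inl (ne_of_gt (lt_of_lt_of_le (lt_min ha hyp) hv.1))
  have hgy_pos : 0 < g y := H.pos y hyp
  constructor
  · -- lower bound
    have key : ∀ a ∈ Ioo (0:ℝ) y,
        exp (-(2*ε)) * g' y / y ^ p' * ((y ^ (p'+1) - a ^ (p'+1))/(p'+1)) ≤ g y := by
      intro a ha
      have hmono : ∫ v in a..y, (exp (-(2*ε)) * g' y / y ^ p') * v ^ p'
          ≤ ∫ v in a..y, g' v := by
        apply intervalIntegral.integral_mono_on ha.2.le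
          ((hint_rpow p' a ha.1).const_mul _) (hint_g' a ha)
        intro v hv
        have hv0 : 0 < v := lt_of_lt_of_le ha.1 hv.1
        have hs : v / y ∈ Ioc (0:ℝ) 1 := ⟨div_pos hv0 hyp, (div_le_one hyp).2 hv.2⟩
        have := (hpot y hy (v/y) hs).1
        rw [div_mul_cancel₀ v hyp.ne'] at this
        calc (exp (-(2*ε)) * g' y / y ^ p') * v ^ p'
            = exp (-(2*ε)) * (v/y) ^ p' * g' y := by
              rw [Real.div_rpow hv0.le hyp.le]
              field_simp
          _ ≤ g' v := this
      have hcalc : ∫ v in a..y, (exp (-(2*ε)) * g' y / y ^ p') * v ^ p'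
          = exp (-(2*ε)) * g' y / y ^ p' * ((y ^ (p'+1) - a ^ (p'+1))/(p'+1)) := by
        rw [intervalIntegral.integral_const_mul, integral_rpow (Or.inl (by linarith))]
      have hga : 0 < g a := H.pos a ha.1
      have := hFTC a ha
      nlinarith [hmono, hcalc]
    -- take a → 0
    have htend : Tendsto (fun a : ℝ =>
        exp (-(2*ε)) * g' y / y ^ p' * ((y ^ (p'+1) - a ^ (p'+1))/(p'+1)))
        (𝓝[>] (0:ℝ)) (𝓝 (exp (-(2*ε)) * g' y / y ^ p' * ((y ^ (p'+1) - 0)/(p'+1)))) := by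
      apply Tendsto.mono_left _ nhdsWithin_le_nhds
      have hc : ContinuousAt (fun a : ℝ => a ^ (p'+1)) 0 :=
        Real.continuousAt_rpow_const 0 (p'+1) (Or.inr (by linarith))
      have h0 : (0:ℝ) ^ (p'+1) = 0 := Real.zero_rpow (by linarith)
      have := hc.tendsto
      rw [h0] at this
      exact (((this.const_sub _).div_const _).const_mul _)
    have hfin : exp (-(2*ε)) * g' y / y ^ p' * ((y ^ (p'+1) - 0)/(p'+1)) ≤ g y := by
      apply le_of_tendsto htend
      filter_upwards [Ioo_mem_nhdsGT_of_mem (⟨le_refl (0:ℝ), hyp⟩ : (0:ℝ) ∈ Ico 0 y)]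
        with a ha using key a ha
    have hyp' : (0:ℝ) < y ^ p' := Real.rpow_pos_of_pos hyp _
    have hne : (β+ε) ≠ 0 := by linarith
    have heq : exp (-(2*ε)) * g' y / y ^ p' * ((y ^ (p'+1) - 0)/(p'+1))
        = exp (-(2*ε))/(β+ε) * (y * g' y) := by
      rw [sub_zero, Real.rpow_add_one hyp.ne', show p'+1 = β+ε by rw [hp'_def]; ring]
      field_simp
    linarith [heq ▸ hfin]
  · -- upper bound
    have key : ∀ a ∈ Ioo (0:ℝ) y,
        g y ≤ g a + exp (2*ε) * g' y / y ^ p * (y ^ (p+1)/(p+1)) := by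
      intro a ha
      have hmono : ∫ v in a..y, g' v
          ≤ ∫ v in a..y, (exp (2*ε) * g' y / y ^ p) * v ^ p := by
        apply intervalIntegral.integral_mono_on ha.2.le (hint_g' a ha)
          ((hint_rpow p a ha.1).const_mul _)
        intro v hv
        have hv0 : 0 < v := lt_of_lt_of_le ha.1 hv.1
        have hs : v / y ∈ Ioc (0:ℝ) 1 := ⟨div_pos hv0 hyp, (div_le_one hyp).2 hv.2⟩
        have := (hpot y hy (v/y) hs).2
        rw [div_mul_cancel₀ v hyp.ne'] at this
        calc g' v ≤ exp (2*ε) * (v/y) ^ p * g' y := this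
          _ = (exp (2*ε) * g' y / y ^ p) * v ^ p := by
              rw [Real.div_rpow hv0.le hyp.le]
              field_simp
      have hcalc : ∫ v in a..y, (exp (2*ε) * g' y / y ^ p) * v ^ p
          = exp (2*ε) * g' y / y ^ p * ((y ^ (p+1) - a ^ (p+1))/(p+1)) := by
        rw [intervalIntegral.integral_const_mul, integral_rpow (Or.inl (by linarith))]
      have := hFTC a ha
      have hap : 0 ≤ a ^ (p+1) := Real.rpow_nonneg ha.1.le _
      have hcy : 0 < exp (2*ε) * g' y / y ^ p := by positivity
      have h1 : exp (2*ε) * g' y / y ^ p * ((y ^ (p+1) - a ^ (p+1))/(p+1))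
          ≤ exp (2*ε) * g' y / y ^ p * (y ^ (p+1)/(p+1)) := by
        apply mul_le_mul_of_nonneg_left _ hcy.le
        apply div_le_div_of_nonneg_right _ (by linarith)  -- might be wrong name
        linarith
      nlinarith [hmono, hcalc]
    have htend : Tendsto (fun a : ℝ => g a + exp (2*ε) * g' y / y ^ p * (y ^ (p+1)/(p+1)))
        (𝓝[>] (0:ℝ)) (𝓝 (0 + exp (2*ε) * g' y / y ^ p * (y ^ (p+1)/(p+1)))) := by
      apply Tendsto.add_const
      have := (H.cont 0 (self_mem_Ici)).tendsto
      rw [H.g0] at this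
      exact this.mono_left (nhdsWithin_mono 0 Ioi_subset_Ici_self)
    have hfin : g y ≤ 0 + exp (2*ε) * g' y / y ^ p * (y ^ (p+1)/(p+1)) := by
      apply ge_of_tendsto htend
      filter_upwards [Ioo_mem_nhdsGT_of_mem (⟨le_refl (0:ℝ), hyp⟩ : (0:ℝ) ∈ Ico 0 y)]
        with a ha using key a ha
    have hyp' : (0:ℝ) < y ^ p := Real.rpow_pos_of_pos hyp _
    have hne : (β-ε) ≠ 0 := by linarith
    have heq : 0 + exp (2*ε) * g' y / y ^ p * (y ^ (p+1)/(p+1))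
        = exp (2*ε)/(β-ε) * (y * g' y) := by
      rw [zero_add, Real.rpow_add_one hyp.ne', show p+1 = β-ε by rw [hp_def]; ring]
      field_simp
    linarith [heq ▸ hfin]

lemma g_ratio (H : GHyp g g' β δ₁) {p P : ℝ} (hp : 1 < p) (hpβ : p < β) (hP : β < P) :
    ∃ y₀ : ℝ, 0 < y₀ ∧ y₀ < min δ₁ 1 ∧ ∀ z y : ℝ, 0 < z → z ≤ y → y ≤ y₀ →
      (z/y) ^ P ≤ g z / g y ∧ g z / g y ≤ (z/y) ^ p := by
  have hev : ∀ᶠ ε in 𝓝[>] (0:ℝ),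
      p ≤ (β-ε)*exp (-(2*ε)) ∧ (β+ε)*exp (2*ε) ≤ P ∧ ε < β - 1 := by
    have hc1 : Tendsto (fun ε : ℝ => (β-ε)*exp (-(2*ε))) (𝓝 0) (𝓝 β) := by
      have h : ContinuousAt (fun ε : ℝ => (β-ε)*exp (-(2*ε))) 0 := by fun_prop
      have h2 := h.tendsto
      norm_num at h2
      exact h2
    have hc2 : Tendsto (fun ε : ℝ => (β+ε)*exp (2*ε)) (𝓝 0) (𝓝 β) := by
      have h : ContinuousAt (fun ε : ℝ => (β+ε)*exp (2*ε)) 0 := by fun_prop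
      have h2 := h.tendsto
      norm_num at h2
      exact h2
    have e1 := hc1.eventually (eventually_ge_nhds hpβ)
    have e2 := hc2.eventually (eventually_le_nhds hP)
    have e3 : ∀ᶠ ε in 𝓝 (0:ℝ), ε < β - 1 := eventually_lt_nhds (by linarith)
    filter_upwards [(e1.and (e2.and e3)).filter_mono nhdsWithin_le_nhds] with ε hε
    exact ⟨hε.1, hε.2.1, hε.2.2⟩
  obtain ⟨ε, hεP, hε0⟩ := (hev.and self_mem_nhdsWithin).exists
  have hε0' : (0:ℝ) < ε := hε0
  obtain ⟨y₁, h1, hδ, hyg⟩ := g_yg' H hε0' hεP.2.2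
  set y₀ : ℝ := min y₁ (1/2) with hy₀_def
  have hy₀0 : 0 < y₀ := lt_min h1 (by norm_num)
  have hy₀lt : y₀ < min δ₁ 1 := by
    apply lt_min
    · exact lt_of_le_of_lt (min_le_left _ _) hδ
    · exact lt_of_le_of_lt (min_le_right _ _) (by norm_num)
  have hδ₀ : y₀ < δ₁ := lt_of_le_of_lt (min_le_left y₁ (1/2)) hδ
  have hprod : exp (2*ε) * exp (-(2*ε)) = 1 := by
    rw [← Real.exp_add]; norm_num
  have hbnd : ∀ v ∈ Ioc (0:ℝ) y₀, p * g v ≤ v * g' v ∧ v * g' v ≤ P * g v := by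
    intro v hv
    have hv1 : v ∈ Ioc (0:ℝ) y₁ := ⟨hv.1, le_trans hv.2 (min_le_left _ _)⟩
    obtain ⟨hl, hu⟩ := hyg v hv1
    have hgv : 0 < g v := H.pos v hv.1
    constructor
    · have hβε : 0 < β - ε := by linarith
      rw [div_mul_eq_mul_div, le_div_iff₀ hβε] at hu
      have h4 := mul_le_mul_of_nonneg_right hu (exp_pos (-(2*ε))).le
      have h2 : (β-ε)*exp (-(2*ε))*g v ≤ v*g' v := by
        calc (β-ε)*exp (-(2*ε))*g v = (g v * (β-ε)) * exp (-(2*ε)) := by ring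
          _ ≤ (exp (2*ε) * (v * g' v)) * exp (-(2*ε)) := h4
          _ = (v * g' v) * (exp (2*ε) * exp (-(2*ε))) := by ring
          _ = v * g' v := by rw [hprod, mul_one]
      calc p * g v ≤ ((β-ε)*exp (-(2*ε))) * g v :=
            mul_le_mul_of_nonneg_right hεP.1 hgv.le
        _ ≤ v * g' v := h2
    · have hβε : 0 < β + ε := by linarith
      rw [div_mul_eq_mul_div, div_le_iff₀ hβε] at hl
      have h4 := mul_le_mul_of_nonneg_right hl (exp_pos (2*ε)).le
      have h2 : v * g' v ≤ (β+ε)*exp (2*ε)*g v := by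
        calc v * g' v = (exp (-(2*ε)) * (v * g' v)) * exp (2*ε) := by
              rw [show (exp (-(2*ε)) * (v * g' v)) * exp (2*ε) =
                (v * g' v) * (exp (2*ε) * exp (-(2*ε))) by ring, hprod, mul_one]
          _ ≤ (g v * (β+ε)) * exp (2*ε) := h4
          _ = (β+ε)*exp (2*ε)*g v := by ring
      calc v * g' v ≤ (β+ε)*exp (2*ε)*g v := h2
        _ ≤ P * g v := mul_le_mul_of_nonneg_right hεP.2.1 hgv.le
  have hFd : ∀ r : ℝ, ∀ v ∈ Ioo (0:ℝ) y₀,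
      HasDerivAt (fun w => log (g w) - r * log w) (g' v / g v - r * v⁻¹) v := by
    intro r v hv
    have hv' : v ∈ Ioo (0:ℝ) δ₁ := ⟨hv.1, lt_of_lt_of_le hv.2 hδ₀.le⟩
    have h1 : HasDerivAt (fun w => log (g w)) (g' v / g v) v :=
      (H.hd v hv').log (H.pos v hv.1).ne'
    have h2 : HasDerivAt (fun w : ℝ => r * log w) (r * v⁻¹) v :=
      (Real.hasDerivAt_log hv.1.ne').const_mul r
    exact h1.sub h2
  have hFc : ∀ r : ℝ, ContinuousOn (fun w => log (g w) - r * log w) (Ioc 0 y₀) := by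
    intro r
    apply ContinuousOn.sub
    · apply ContinuousOn.log
      · exact H.cont.mono (fun v hv => le_of_lt hv.1)
      · exact fun v hv => (H.pos v hv.1).ne'
    · exact ContinuousOn.const_smul
        (Real.continuousOn_log.mono (fun v hv => ne_of_gt hv.1)) r
  have hmonoF : MonotoneOn (fun w => log (g w) - p * log w) (Ioc 0 y₀) := by
    apply monotoneOn_of_deriv_nonneg (convex_Ioc 0 y₀) (hFc p)
    · intro v hv
      rw [interior_Ioc] at hv
      exact ((hFd p v hv).differentiableAt).differentiableWithinAt
    intro v hv
    rw [interior_Ioc] at hv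
    rw [(hFd p v hv).deriv]
    have hbv := (hbnd v ⟨hv.1, hv.2.le⟩).1
    have hgv : 0 < g v := H.pos v hv.1
    rw [sub_nonneg, ← div_eq_mul_inv, div_le_div_iff₀ hv.1 hgv]
    linarith
  have hantiF : AntitoneOn (fun w => log (g w) - P * log w) (Ioc 0 y₀) := by
    apply antitoneOn_of_deriv_nonpos (convex_Ioc 0 y₀) (hFc P)
    · intro v hv
      rw [interior_Ioc] at hv
      exact ((hFd P v hv).differentiableAt).differentiableWithinAt
    intro v hv
    rw [interior_Ioc] at hv
    rw [(hFd P v hv).deriv]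
    have hbv := (hbnd v ⟨hv.1, hv.2.le⟩).2
    have hgv : 0 < g v := H.pos v hv.1
    rw [sub_nonpos, ← div_eq_mul_inv, div_le_div_iff₀ hgv hv.1]
    linarith
  refine ⟨y₀, hy₀0, hy₀lt, ?_⟩
  intro z y hz hzy hyy₀
  have hy0 : 0 < y := lt_of_lt_of_le hz hzy
  have hzI : z ∈ Ioc (0:ℝ) y₀ := ⟨hz, le_trans hzy hyy₀⟩
  have hyI : y ∈ Ioc (0:ℝ) y₀ := ⟨hy0, hyy₀⟩
  have hgz : 0 < g z := H.pos z hz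
  have hgy : 0 < g y := H.pos y hy0
  have e1 : g z / g y = exp (log (g z) - log (g y)) := by
    rw [Real.exp_sub, Real.exp_log hgz, Real.exp_log hgy]
  have e2 : ∀ r : ℝ, (z/y) ^ r = exp ((log z - log y) * r) := by
    intro r
    rw [Real.rpow_def_of_pos (div_pos hz hy0), Real.log_div hz.ne' hy0.ne']
  constructor
  · have hF := hantiF hzI hyI hzy
    rw [e1, e2 P]
    apply exp_le_exp.2
    simp only at hF
    linarith
  · have hF := hmonoF hzI hyI hzy
    rw [e1, e2 p]
    apply exp_le_exp.2
    simp only at hF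
    linarith

lemma y_div_g_atTop (H : GHyp g g' β δ₁) :
    Tendsto (fun y => y / g y) (𝓝[>] (0:ℝ)) atTop := by
  obtain ⟨y₀, hy₀0, hy₀lt, hr⟩ := g_ratio H (p := (1+β)/2) (P := β+1)
    (by linarith [H.βgt]) (by linarith [H.βgt]) (by linarith)
  set p : ℝ := (1+β)/2 with hp_def
  have hp1 : 1 < p := by rw [hp_def]; linarith [H.βgt]
  have hgy₀ : 0 < g y₀ := H.pos y₀ hy₀0
  have htend : Tendsto (fun y : ℝ => (y₀ ^ p / g y₀) * y ^ (1-p)) (𝓝[>] (0:ℝ)) atTop := by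
    apply Tendsto.const_mul_atTop (by positivity)
    have h1 : Tendsto (fun y : ℝ => (y⁻¹) ^ (p-1)) (𝓝[>] (0:ℝ)) atTop :=
      (tendsto_rpow_atTop (by linarith)).comp tendsto_inv_nhdsGT_zero
    apply h1.congr'
    filter_upwards [self_mem_nhdsWithin] with y hy
    have hy0 : (0:ℝ) < y := hy
    rw [Real.inv_rpow hy0.le, ← Real.rpow_neg hy0.le]
    congr 1
    ring
  apply tendsto_atTop_mono' _ _ htend
  filter_upwards [Ioo_mem_nhdsGT_of_mem (⟨le_refl (0:ℝ), hy₀0⟩ : (0:ℝ) ∈ Ico 0 y₀)]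
    with y hy
  have hy0 : (0:ℝ) < y := hy.1
  have hgy : 0 < g y := H.pos y hy0
  have hrat := (hr y y₀ hy0 hy.2.le (le_refl _)).2
  have hdr : (y/y₀) ^ p = y ^ p / y₀ ^ p := Real.div_rpow hy0.le hy₀0.le p
  rw [hdr] at hrat
  have hyp : (0:ℝ) < y ^ p := rpow_pos_of_pos hy0 _
  have hy₀p : (0:ℝ) < y₀ ^ p := rpow_pos_of_pos hy₀0 _
  have hcross : g y * y₀ ^ p ≤ y ^ p * g y₀ := by
    rw [div_le_div_iff₀ hgy₀ hy₀p] at hrat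
    linarith
  have h2 : y ^ (1-p) = y / y ^ p := by
    rw [Real.rpow_sub hy0, Real.rpow_one]
  rw [h2, show y₀ ^ p / g y₀ * (y / y ^ p) = (y₀ ^ p * (y / y ^ p)) / g y₀ by ring,
    div_le_div_iff₀ hgy₀ hgy]
  have h3 : y * (g y * y₀ ^ p) ≤ y * (y ^ p * g y₀) :=
    mul_le_mul_of_nonneg_left hcross hy0.le
  calc y₀ ^ p * (y / y ^ p) * g y = (y * (g y * y₀ ^ p)) / y ^ p := by ring
    _ ≤ (y * (y ^ p * g y₀)) / y ^ p := by gcongr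
    _ = y * g y₀ := by field_simp

lemma G_asymp (H : GHyp g g' β δ₁) {η : ℝ} (hη : 0 < η) (hη1 : η < 1) :
    ∀ᶠ y in 𝓝[>] (0:ℝ),
      (1-η)/(β-1) * (y / g y) ≤ Gfun g y ∧ Gfun g y ≤ (1+η)/(β-1) * (y / g y) := by
  have hβ1 : (0:ℝ) < β - 1 := by linarith [H.βgt]
  obtain ⟨p, hp_def⟩ : ∃ p : ℝ, p = 1 + (β-1)/(1+η/2) := ⟨_, rfl⟩
  obtain ⟨P, hP_def⟩ : ∃ P : ℝ, P = 1 + (β-1)/(1-η/4) := ⟨_, rfl⟩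
  have hp1 : 1 < p := by
    rw [hp_def]
    have : 0 < (β-1)/(1+η/2) := by positivity
    linarith
  have hpβ : p < β := by
    have h := div_lt_self hβ1 (by linarith : (1:ℝ) < 1+η/2)
    rw [hp_def]; linarith
  have hPβ : β < P := by
    have h4 : (0:ℝ) < 1-η/4 := by linarith
    have h5 : (β-1)*(1-η/4) < β-1 := by nlinarith
    have h := (lt_div_iff₀ h4).2 h5
    rw [hP_def]; linarith
  have hP1 : (0:ℝ) < P - 1 := by linarith
  obtain ⟨y₀, hy₀0, hy₀lt, hr⟩ := g_ratio H hp1 hpβ hPβ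
  have hy₀δ : y₀ < δ₁ := lt_of_lt_of_le hy₀lt (min_le_left _ _)
  have hy₀1 : y₀ < 1 := lt_of_lt_of_le hy₀lt (min_le_right _ _)
  have hgy₀ : 0 < g y₀ := H.pos y₀ hy₀0
  have hG₀ : 0 ≤ Gfun g y₀ := Gfun_nonneg H hy₀0 hy₀1.le
  -- eventual conditions
  have ev1 : ∀ᶠ y in 𝓝[>] (0:ℝ), y ∈ Ioo (0:ℝ) y₀ :=
    Ioo_mem_nhdsGT_of_mem (⟨le_refl _, hy₀0⟩ : (0:ℝ) ∈ Ico 0 y₀)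
  have ev2 : ∀ᶠ y in 𝓝[>] (0:ℝ), Gfun g y₀ * ((β-1)/(η/2)) ≤ y / g y :=
    (y_div_g_atTop H).eventually_ge_atTop _
  have ev3 : ∀ᶠ y in 𝓝[>] (0:ℝ), (y/y₀) ^ (P-1) ≤ η/2 := by
    have hc : Tendsto (fun y : ℝ => (y/y₀) ^ (P-1)) (𝓝 0) (𝓝 0) := by
      have h1 : Tendsto (fun y : ℝ => y/y₀) (𝓝 0) (𝓝 0) := by
        have := (tendsto_id (α := ℝ) (x := 𝓝 (0:ℝ))).div_const y₀
        simpa using this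
      have h2 : Tendsto (fun w : ℝ => w ^ (P-1)) (𝓝 0) (𝓝 0) := by
        have h := (Real.continuousAt_rpow_const 0 (P-1) (Or.inr hP1.le)).tendsto
        rwa [Real.zero_rpow (by linarith)] at h
      exact h2.comp h1
    exact (hc.eventually (eventually_le_nhds (by linarith))).filter_mono nhdsWithin_le_nhds
  filter_upwards [ev1, ev2, ev3] with y hy hev2 hev3
  have hy0 : (0:ℝ) < y := hy.1
  have hgy : 0 < g y := H.pos y hy0
  have hydg : (0:ℝ) ≤ y / g y := by positivity
  -- integral identity
  have hI : Gfun g y - Gfun g y₀ = ∫ v in y..y₀, 1/g v := Gfun_sub H hy0 hy₀0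
  have hint_inv : IntervalIntegrable (fun v => 1/g v) volume y y₀ := by
    apply ContinuousOn.intervalIntegrable
    have hsub : uIcc y y₀ ⊆ Ici 0 := fun u hu => le_trans (le_min hy0.le hy₀0.le) hu.1
    apply ContinuousOn.div continuousOn_const (H.cont.mono hsub)
    exact fun u hu => (H.pos u (lt_of_lt_of_le (lt_min hy0 hy₀0) hu.1)).ne'
  have hint_rpow : ∀ r : ℝ, IntervalIntegrable (fun v => v ^ (-r)) volume y y₀ := by
    intro r
    apply ContinuousOn.intervalIntegrable
    apply ContinuousOn.rpow_const continuousOn_id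
    exact fun v hv => Or.inl (ne_of_gt (lt_of_lt_of_le (lt_min hy0 hy₀0) hv.1))
  have hcalc : ∀ r : ℝ, 1 < r → ∫ v in y..y₀, v ^ (-r)
      = (y₀ ^ (1-r) - y ^ (1-r))/(1-r) := by
    intro r hr1
    rw [integral_rpow]
    · rw [show -r+1 = 1-r by ring]
    · refine Or.inr ⟨by intro h; rw [neg_eq_iff_eq_neg] at h; linarith, ?_⟩
      rw [uIcc_of_le hy.2.le]
      intro hmem
      exact absurd hmem.1 (not_le.2 hy0)
  -- pointwise bounds
  have hbd : ∀ v ∈ Icc y y₀,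
      (y ^ P/g y) * v ^ (-P) ≤ 1/g v ∧ 1/g v ≤ (y ^ p/g y) * v ^ (-p) := by
    intro v hv
    have hv0 : 0 < v := lt_of_lt_of_le hy0 hv.1
    have hgv : 0 < g v := H.pos v hv0
    obtain ⟨hl, hu⟩ := hr y v hy0 hv.1 hv.2
    have hid : ∀ r : ℝ, (y/v) ^ r = (y ^ r) * v ^ (-r) := by
      intro r
      rw [Real.div_rpow hy0.le hv0.le, Real.rpow_neg hv0.le, div_eq_mul_inv]
    constructor
    · rw [hid P] at hl
      calc (y ^ P/g y) * v ^ (-P) = (y ^ P * v ^ (-P)) / g y := by ring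
        _ ≤ (g y / g v) / g y := by gcongr
        _ = 1/g v := by field_simp
    · rw [hid p] at hu
      calc 1/g v = (g y / g v) / g y := by field_simp
        _ ≤ (y ^ p * v ^ (-p)) / g y := by gcongr
        _ = (y ^ p/g y) * v ^ (-p) := by ring
  have hp1' : (0:ℝ) < p - 1 := by linarith
  have hrecip_p : 1/(p-1) = (1+η/2)/(β-1) := by
    rw [hp_def, show 1 + (β-1)/(1+η/2) - 1 = (β-1)/(1+η/2) by ring, one_div_div]
  have hrecip_P : 1/(P-1) = (1-η/4)/(β-1) := by
    rw [hP_def, show 1 + (β-1)/(1-η/4) - 1 = (β-1)/(1-η/4) by ring, one_div_div]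
  have e1 : ∀ r : ℝ, y ^ r * y ^ (1-r) = y := by
    intro r
    rw [← Real.rpow_add hy0, show r+(1-r) = 1 by ring, Real.rpow_one]
  constructor
  · -- lower bound
    have hmono2 : ∫ v in y..y₀, (y ^ P/g y) * v ^ (-P) ≤ ∫ v in y..y₀, 1/g v :=
      intervalIntegral.integral_mono_on hy.2.le ((hint_rpow P).const_mul _) hint_inv
        (fun v hv => (hbd v hv).1)
    have hc2 : ∫ v in y..y₀, (y ^ P/g y) * v ^ (-P)
        = (y ^ P/g y) * ((y₀ ^ (1-P) - y ^ (1-P))/(1-P)) := by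
      rw [intervalIntegral.integral_const_mul, hcalc P (by linarith)]
    obtain ⟨A, hA_def⟩ : ∃ A : ℝ, A = (y/y₀) ^ (P-1) := ⟨_, rfl⟩
    rw [← hA_def] at hev3
    have e2 : y ^ P * y₀ ^ (1-P) = y * A := by
      rw [hA_def, Real.div_rpow hy0.le hy₀0.le]
      have h6 : y * (y ^ (P-1) / y₀ ^ (P-1)) = (y * y ^ (P-1)) / y₀ ^ (P-1) := by ring
      rw [h6]
      have h7 : y * y ^ (P-1) = y ^ P := by
        calc y * y ^ (P-1) = y ^ (1:ℝ) * y ^ (P-1) := by rw [Real.rpow_one]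
          _ = y ^ (1+(P-1)) := (Real.rpow_add hy0 _ _).symm
          _ = y ^ P := by rw [show 1+(P-1) = P by ring]
      rw [h7]
      have h8 : y₀ ^ (1-P) = (y₀ ^ (P-1))⁻¹ := by
        rw [← Real.rpow_neg hy₀0.le, show -(P-1) = 1-P by ring]
      rw [h8, div_eq_mul_inv]
    have hkey : (y ^ P/g y) * ((y₀ ^ (1-P) - y ^ (1-P))/(1-P))
        = (y/g y) * ((1-A)/(P-1)) := by
      have hne1 : g y ≠ 0 := hgy.ne'
      have hne2 : (1-P) ≠ 0 := by linarith
      have hne3 : (P-1) ≠ 0 := by linarith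
      rw [div_mul_div_comm, mul_sub, e2, e1 P]
      field_simp
      ring
    have hA2 : 1 - A ≥ 1 - η/2 := by linarith [hev3]
    have hge : (y/g y) * ((1-A)/(P-1)) ≥ (1-η)/(β-1) * (y/g y) := by
      have h10 : (1-A)/(P-1) ≥ (1-η/2) * (1/(P-1)) := by
        rw [mul_one_div]
        exact (div_le_div_iff_of_pos_right hP1).2 (by linarith)
      have h11 : (1-η/2) * (1/(P-1)) = (1-η/2)*(1-η/4)/(β-1) := by
        rw [hrecip_P]; ring
      have h12 : (1-η/2)*(1-η/4)/(β-1) ≥ (1-η)/(β-1) := by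
        exact (div_le_div_iff_of_pos_right hβ1).2 (by nlinarith)
      calc (y/g y) * ((1-A)/(P-1)) ≥ (y/g y) * ((1-η)/(β-1)) := by
            apply mul_le_mul_of_nonneg_left _ hydg
            linarith
        _ = (1-η)/(β-1) * (y/g y) := by ring
    have : Gfun g y ≥ Gfun g y₀ + (y/g y) * ((1-A)/(P-1)) := by
      have := le_trans (le_of_eq hc2.symm) hmono2
      rw [hkey] at this
      linarith [hI]
    linarith [hG₀, hge]
  · -- upper bound
    have hmono : ∫ v in y..y₀, 1/g v ≤ ∫ v in y..y₀, (y ^ p/g y) * v ^ (-p) :=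
      intervalIntegral.integral_mono_on hy.2.le hint_inv ((hint_rpow p).const_mul _)
        (fun v hv => (hbd v hv).2)
    have hc3 : ∫ v in y..y₀, (y ^ p/g y) * v ^ (-p)
        = (y ^ p/g y) * ((y₀ ^ (1-p) - y ^ (1-p))/(1-p)) := by
      rw [intervalIntegral.integral_const_mul, hcalc p hp1]
    have hstep : (y ^ p/g y) * ((y₀ ^ (1-p) - y ^ (1-p))/(1-p)) ≤ (y/g y) * (1/(p-1)) := by
      have h13 : (y ^ p/g y) * ((y₀ ^ (1-p) - y ^ (1-p))/(1-p))
          = ((y ^ p * y ^ (1-p)) - (y ^ p * y₀ ^ (1-p)))/(g y*(p-1)) := by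
        have hne1 : g y ≠ 0 := hgy.ne'
        have hne2 : (1-p) ≠ 0 := by linarith
        have hne3 : (p-1) ≠ 0 := by linarith
        field_simp
        ring
      rw [h13, e1 p]
      have h14 : 0 ≤ y ^ p * y₀ ^ (1-p) := by positivity
      calc (y - y ^ p * y₀ ^ (1-p))/(g y*(p-1)) ≤ y/(g y*(p-1)) :=
            (div_le_div_iff_of_pos_right (by positivity)).2 (by linarith)
        _ = (y/g y) * (1/(p-1)) := by field_simp
    have hGy₀le : Gfun g y₀ ≤ (η/2)/(β-1) * (y/g y) := by
      have hpos : (0:ℝ) < (η/2)/(β-1) := by positivity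
      have h15 := mul_le_mul_of_nonneg_left hev2 hpos.le
      calc Gfun g y₀ = (η/2)/(β-1) * (Gfun g y₀ * ((β-1)/(η/2))) := by
            field_simp
        _ ≤ (η/2)/(β-1) * (y/g y) := h15
    have h16 : Gfun g y ≤ Gfun g y₀ + (y/g y) * (1/(p-1)) := by
      have := le_trans hmono (le_of_eq hc3)
      linarith [hI, hstep]
    calc Gfun g y ≤ Gfun g y₀ + (y/g y) * (1/(p-1)) := h16
      _ ≤ (η/2)/(β-1) * (y/g y) + (y/g y) * ((1+η/2)/(β-1)) := by
          rw [← hrecip_p]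
          linarith [hGy₀le]
      _ = (1+η)/(β-1) * (y/g y) := by ring

lemma g_ratio_lower_ev (H : GHyp g g' β δ₁) {c η : ℝ} (hc : 0 < c) (hη : 0 < η) :
    ∀ᶠ y in 𝓝[>] (0:ℝ), c ^ β * (1-η) * g y ≤ g (c*y) := by
  rcases le_or_gt 1 η with hη1 | hη1
  · filter_upwards [self_mem_nhdsWithin] with y hy
    have hy0 : (0:ℝ) < y := hy
    have h1 : c ^ β * (1-η) * g y ≤ 0 := by
      have hcb : (0:ℝ) < c ^ β := rpow_pos_of_pos hc _
      have h0 : c ^ β * (1-η) ≤ 0 := mul_nonpos_iff.2 (Or.inl ⟨hcb.le, by linarith⟩)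
      exact mul_nonpos_iff.2 (Or.inr ⟨h0, (H.pos y hy0).le⟩)
    exact le_trans h1 (H.pos _ (mul_pos hc hy0)).le
  · -- choose ε
    have hβ1 : (0:ℝ) < β - 1 := by linarith [H.βgt]
    have hrp : Tendsto (fun ε : ℝ => c ^ ε) (𝓝 0) (𝓝 1) := by
      have h1 : Tendsto (fun ε : ℝ => exp (Real.log c * ε)) (𝓝 0) (𝓝 1) := by
        have h2 : ContinuousAt (fun ε : ℝ => exp (Real.log c * ε)) 0 := by fun_prop
        have h3 := h2.tendsto
        norm_num at h3
        exact h3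
      apply h1.congr
      intro ε
      rw [Real.rpow_def_of_pos hc]
    have hrn : Tendsto (fun ε : ℝ => c ^ (-ε)) (𝓝 0) (𝓝 1) := by
      have hneg : Tendsto (fun ε : ℝ => -ε) (𝓝 (0:ℝ)) (𝓝 0) := by
        simpa using (continuous_neg.tendsto (0:ℝ))
      exact hrp.comp hneg
    have e1 := hrp.eventually (eventually_ge_nhds (by linarith : 1-η < 1))
    have e2 := hrn.eventually (eventually_ge_nhds (by linarith : 1-η < 1))
    have e3 : ∀ᶠ ε in 𝓝 (0:ℝ), ε < β - 1 := eventually_lt_nhds hβ1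
    have e4 : ∀ᶠ ε in 𝓝[>] (0:ℝ), (1-η ≤ c ^ ε) ∧ ((1-η ≤ c ^ (-ε)) ∧ ε < β-1) :=
      (e1.and (e2.and e3)).filter_mono nhdsWithin_le_nhds
    obtain ⟨ε, hεc, hε0⟩ := (e4.and self_mem_nhdsWithin).exists
    have hε0' : (0:ℝ) < ε := hε0
    obtain ⟨hce, hcne, hεβ⟩ := hεc
    obtain ⟨y₀, hy₀0, hy₀lt, hr⟩ := g_ratio H (p := β - ε) (P := β + ε)
      (by linarith) (by linarith) (by linarith)
    have hm0 : 0 < min y₀ (y₀/c) := lt_min hy₀0 (by positivity)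
    filter_upwards [Ioo_mem_nhdsGT_of_mem
      (⟨le_refl _, hm0⟩ : (0:ℝ) ∈ Ico 0 (min y₀ (y₀/c)))] with y hy
    have hy0 : (0:ℝ) < y := hy.1
    have hyy₀ : y ≤ y₀ := le_trans hy.2.le (min_le_left _ _)
    have hcy : c * y ≤ y₀ := by
      have h1 : y ≤ y₀/c := le_trans hy.2.le (min_le_right _ _)
      calc c * y ≤ c * (y₀/c) := mul_le_mul_of_nonneg_left h1 hc.le
        _ = y₀ := by field_simp
    have hgy : 0 < g y := H.pos y hy0
    have hgcy : 0 < g (c*y) := H.pos _ (mul_pos hc hy0)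
    have hcβ : (0:ℝ) < c ^ β := rpow_pos_of_pos hc _
    rcases le_or_gt c 1 with hc1 | hc1
    · have h1 := (hr (c*y) y (mul_pos hc hy0)
        (by nlinarith) hyy₀).1
      rw [mul_div_assoc, div_self hy0.ne', mul_one] at h1
      rw [le_div_iff₀ hgy] at h1
      have h2 : c ^ (β+ε) = c ^ β * c ^ ε := Real.rpow_add hc _ _
      have h3 : c ^ β * (1-η) ≤ c ^ (β+ε) := by
        rw [h2]
        exact mul_le_mul_of_nonneg_left hce hcβ.le
      calc c ^ β * (1-η) * g y ≤ c ^ (β+ε) * g y :=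
            mul_le_mul_of_nonneg_right h3 hgy.le
        _ ≤ g (c*y) := h1
    · have h1 := (hr y (c*y) hy0 (by nlinarith) hcy).2
      have hyd : y/(c*y) = c⁻¹ := by
        rw [mul_comm]
        field_simp
      rw [hyd, Real.inv_rpow hc.le] at h1
      rw [div_le_iff₀ hgcy] at h1
      have h2 : c ^ (β-ε) * g y ≤ g (c*y) := by
        have h5 : (0:ℝ) < c ^ (β-ε) := rpow_pos_of_pos hc _
        have h6 : c ^ (β-ε) * (c ^ (β-ε))⁻¹ = 1 := mul_inv_cancel₀ h5.ne'
        calc c ^ (β-ε) * g y ≤ c ^ (β-ε) * ((c ^ (β-ε))⁻¹ * g (c*y)) :=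
              mul_le_mul_of_nonneg_left h1 h5.le
          _ = (c ^ (β-ε) * (c ^ (β-ε))⁻¹) * g (c*y) := by ring
          _ = g (c*y) := by rw [h6, one_mul]
      have h3 : c ^ β * (1-η) ≤ c ^ (β-ε) := by
        have h7 : c ^ (β-ε) = c ^ β * c ^ (-ε) := by
          rw [show β-ε = β + (-ε) by ring, Real.rpow_add hc]
        rw [h7]
        exact mul_le_mul_of_nonneg_left hcne hcβ.le
      nlinarith [hgy]

section GinvSec

variable {Ginv : ℝ → ℝ}

lemma Ginv_anti (H : GHyp g g' β δ₁)
    (hGr : ∀ z : ℝ, 0 ≤ z → Ginv z ∈ Set.Ioc (0:ℝ) 1 ∧ Gfun g (Ginv z) = z)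
    {z₁ z₂ : ℝ} (h1 : 0 ≤ z₁) (h12 : z₁ ≤ z₂) : Ginv z₂ ≤ Ginv z₁ := by
  by_contra hcon
  push_neg at hcon
  have h2 := Gfun_anti H (hGr z₁ h1).1.1 hcon
  rw [(hGr z₁ h1).2, (hGr z₂ (le_trans h1 h12)).2] at h2
  linarith

lemma Ginv_lt (H : GHyp g g' β δ₁)
    (hGr : ∀ z : ℝ, 0 ≤ z → Ginv z ∈ Set.Ioc (0:ℝ) 1 ∧ Gfun g (Ginv z) = z)
    {a t : ℝ} (ha : 0 < a) (ht : 0 ≤ t) (htG : Gfun g a < t) : Ginv t < a := by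
  by_contra hcon
  push_neg at hcon
  rcases eq_or_lt_of_le hcon with heq | hlt
  · rw [heq] at htG
    rw [(hGr t ht).2] at htG
    linarith
  · have h2 := Gfun_anti H ha hlt
    rw [(hGr t ht).2] at h2
    linarith

lemma Ginv_tendsto (H : GHyp g g' β δ₁)
    (hGr : ∀ z : ℝ, 0 ≤ z → Ginv z ∈ Set.Ioc (0:ℝ) 1 ∧ Gfun g (Ginv z) = z) :
    Tendsto Ginv atTop (𝓝[>] (0:ℝ)) := by
  apply tendsto_nhdsWithin_of_tendsto_nhds_of_eventually_within
  · rw [tendsto_order]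
    constructor
    · intro a ha
      filter_upwards [eventually_ge_atTop (0:ℝ)] with t ht
      exact lt_trans ha (hGr t ht).1.1
    · intro a ha
      have ha' : 0 < min a 1 := lt_min ha one_pos
      filter_upwards [eventually_ge_atTop (0:ℝ),
        eventually_gt_atTop (Gfun g (min a 1))] with t ht htG
      exact lt_of_lt_of_le (Ginv_lt H hGr ha' ht htG) (min_le_left _ _)
  · filter_upwards [eventually_ge_atTop (0:ℝ)] with t ht
    exact (hGr t ht).1.1

lemma Ginv_ratio (H : GHyp g g' β δ₁)
    (hGr : ∀ z : ℝ, 0 ≤ z → Ginv z ∈ Set.Ioc (0:ℝ) 1 ∧ Gfun g (Ginv z) = z)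
    {c μ : ℝ} (hc0 : 0 < c) (hc1 : c < 1) (hμ : 1 < μ) (hkey : μ ^ (β-1) * c < 1) :
    ∀ᶠ t in atTop, μ * Ginv t ≤ Ginv (c*t) := by
  have hβ1 : (0:ℝ) < β - 1 := by linarith [H.βgt]
  have hμ0 : (0:ℝ) < μ := by linarith
  have hckey : c < μ ^ (1-β) := by
    have h1 : (0:ℝ) < μ ^ (β-1) := rpow_pos_of_pos hμ0 _
    have h2 : μ ^ (1-β) = (μ ^ (β-1))⁻¹ := by
      rw [← Real.rpow_neg hμ0.le, show -(β-1) = 1-β by ring]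
    have h3 : μ ^ (β-1) * (μ ^ (β-1))⁻¹ = 1 := mul_inv_cancel₀ h1.ne'
    rw [h2]
    nlinarith [h1, h3, hkey]
  -- choose ε (= η and P-β simultaneously)
  have hcont : Tendsto (fun ε : ℝ => (1-ε) * μ ^ (1-β-ε) - c*(1+ε)) (𝓝 0)
      (𝓝 (μ ^ (1-β) - c)) := by
    have h1 : Tendsto (fun ε : ℝ => μ ^ (1-β-ε)) (𝓝 0) (𝓝 (μ ^ (1-β))) := by
      have h2 : ContinuousAt (fun ε : ℝ => exp (Real.log μ * (1-β-ε))) 0 := by fun_prop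
      have h3 := h2.tendsto
      have h4 : (fun ε : ℝ => exp (Real.log μ * (1-β-ε))) = fun ε : ℝ => μ ^ (1-β-ε) := by
        funext ε
        rw [Real.rpow_def_of_pos hμ0]
      rw [h4] at h3
      norm_num at h3
      rw [show exp (Real.log μ * (1-β)) = μ ^ (1-β) by rw [Real.rpow_def_of_pos hμ0]] at h3
      exact h3
    have h5 : Tendsto (fun ε : ℝ => (1:ℝ)-ε) (𝓝 0) (𝓝 1) := by
      have : ContinuousAt (fun ε : ℝ => (1:ℝ)-ε) 0 := by fun_prop
      simpa using this.tendsto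
    have h6 : Tendsto (fun ε : ℝ => c*(1+ε)) (𝓝 0) (𝓝 c) := by
      have : ContinuousAt (fun ε : ℝ => c*(1+ε)) 0 := by fun_prop
      simpa using this.tendsto
    have := (h5.mul h1).sub h6
    simpa using this
  have hevε : ∀ᶠ ε in 𝓝 (0:ℝ), 0 < (1-ε) * μ ^ (1-β-ε) - c*(1+ε) :=
    hcont.eventually (eventually_gt_nhds (by linarith))
  have hevε2 : ∀ᶠ ε in 𝓝 (0:ℝ), ε < 1 := eventually_lt_nhds one_pos
  have e4 : ∀ᶠ ε in 𝓝[>] (0:ℝ), (0 < (1-ε) * μ ^ (1-β-ε) - c*(1+ε)) ∧ ε < 1 :=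
    (hevε.and hevε2).filter_mono nhdsWithin_le_nhds
  obtain ⟨ε, hεgood, hε0⟩ := (e4.and self_mem_nhdsWithin).exists
  have hε0' : (0:ℝ) < ε := hε0
  obtain ⟨hεkey, hε1⟩ := hεgood
  -- ratio bounds
  obtain ⟨y₀, hy₀0, hy₀lt, hr⟩ := g_ratio H (p := (1+β)/2) (P := β + ε)
    (by linarith [H.βgt]) (by linarith [H.βgt]) (by linarith)
  -- eventual claim in y
  have evG : ∀ᶠ y in 𝓝[>] (0:ℝ), c * Gfun g y ≤ Gfun g (μ*y) := by
    have hμy : Tendsto (fun y : ℝ => μ*y) (𝓝[>] (0:ℝ)) (𝓝[>] (0:ℝ)) := by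
      apply tendsto_nhdsWithin_of_tendsto_nhds_of_eventually_within
      · have : ContinuousAt (fun y : ℝ => μ*y) 0 := by fun_prop
        have h := this.tendsto
        norm_num at h
        exact h.mono_left nhdsWithin_le_nhds
      · filter_upwards [self_mem_nhdsWithin] with y hy
        exact mul_pos hμ0 hy
    filter_upwards [G_asymp H hε0' hε1, hμy.eventually (G_asymp H hε0' hε1),
      Ioo_mem_nhdsGT_of_mem (⟨le_refl _, by positivity⟩ : (0:ℝ) ∈ Ico 0 (y₀/μ)),
      self_mem_nhdsWithin] with y hGy hGμy hyy₀ hy0'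
    have hy0 : (0:ℝ) < y := hy0'
    have hgy : 0 < g y := H.pos y hy0
    have hμyy₀ : μ * y ≤ y₀ := by
      have h1 : y ≤ y₀/μ := hyy₀.2.le
      calc μ * y ≤ μ * (y₀/μ) := mul_le_mul_of_nonneg_left h1 hμ0.le
        _ = y₀ := by field_simp
    have hgμy : 0 < g (μ*y) := H.pos _ (mul_pos hμ0 hy0)
    -- g(μy) ≤ μ^(β+ε) g y
    have hgr := (hr y (μ*y) hy0 (by nlinarith) hμyy₀).1
    have hyd : y/(μ*y) = μ⁻¹ := by
      rw [mul_comm]; field_simp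
    rw [hyd, Real.inv_rpow hμ0.le] at hgr
    -- hgr : (μ ^ (β+ε))⁻¹ ≤ g y / g (μ*y)
    have hgμ_le : g (μ*y) ≤ μ ^ (β+ε) * g y := by
      have h5 : (0:ℝ) < μ ^ (β+ε) := rpow_pos_of_pos hμ0 _
      rw [le_div_iff₀ hgμy] at hgr
      calc g (μ*y) = μ ^ (β+ε) * ((μ ^ (β+ε))⁻¹ * g (μ*y)) := by
            field_simp
        _ ≤ μ ^ (β+ε) * g y := by
            apply mul_le_mul_of_nonneg_left _ h5.le
            linarith [hgr]
    -- chain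
    have hμgy : (0:ℝ) ≤ μ * y / g (μ*y) := by positivity
    have hB : (1-ε)/(β-1) * (μ*y/g (μ*y)) ≤ Gfun g (μ*y) := hGμy.1
    have hA : Gfun g y ≤ (1+ε)/(β-1) * (y/g y) := hGy.2
    have hDpos : (0:ℝ) < μ ^ (β+ε) * g y := by
      have : (0:ℝ) < μ ^ (β+ε) := rpow_pos_of_pos hμ0 _
      positivity
    have h7 : μ*y/(μ ^ (β+ε) * g y) ≤ μ*y/g (μ*y) := by
      rw [div_le_div_iff₀ hDpos hgμy]
      exact mul_le_mul_of_nonneg_left hgμ_le (mul_pos hμ0 hy0).le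
    have hid : μ*y/(μ ^ (β+ε) * g y) = μ ^ (1-β-ε)*(y/g y) := by
      have h8 : μ ^ (1-β-ε) * μ ^ (β+ε) = μ := by
        rw [← Real.rpow_add hμ0, show 1-β-ε+(β+ε) = 1 by ring, Real.rpow_one]
      rw [div_eq_iff hDpos.ne', eq_comm]
      calc μ ^ (1-β-ε)*(y/g y)*(μ ^ (β+ε)*g y)
          = (μ ^ (1-β-ε)*μ ^ (β+ε)) * (y/g y*g y) := by ring
        _ = μ * y := by rw [h8]; field_simp
    have hcoef : (0:ℝ) ≤ (1-ε)/(β-1) := div_nonneg (by linarith) (by linarith)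
    have hlow : (1-ε) * μ ^ (1-β-ε) / (β-1) * (y/g y) ≤ Gfun g (μ*y) := by
      calc (1-ε) * μ ^ (1-β-ε) / (β-1) * (y/g y)
          = (1-ε)/(β-1) * (μ ^ (1-β-ε)*(y/g y)) := by ring
        _ = (1-ε)/(β-1) * (μ*y/(μ ^ (β+ε)*g y)) := by rw [hid]
        _ ≤ (1-ε)/(β-1) * (μ*y/g (μ*y)) := mul_le_mul_of_nonneg_left h7 hcoef
        _ ≤ Gfun g (μ*y) := hB
    have hydg : (0:ℝ) ≤ y/g y := by positivity
    have hcG : c * Gfun g y ≤ c * ((1+ε)/(β-1) * (y/g y)) :=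
      mul_le_mul_of_nonneg_left hA hc0.le
    have hmid : c*((1+ε)/(β-1)*(y/g y)) ≤ (1-ε)*μ ^ (1-β-ε)/(β-1)*(y/g y) := by
      calc c*((1+ε)/(β-1)*(y/g y)) = (c*(1+ε))/(β-1)*(y/g y) := by ring
        _ ≤ ((1-ε)*μ ^ (1-β-ε))/(β-1)*(y/g y) := by
            apply mul_le_mul_of_nonneg_right _ hydg
            exact (div_le_div_iff_of_pos_right hβ1).2 (by linarith [hεkey])
        _ = (1-ε)*μ ^ (1-β-ε)/(β-1)*(y/g y) := by ring
    linarith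
  -- conclude
  have hGtend := Ginv_tendsto H hGr
  filter_upwards [eventually_ge_atTop (0:ℝ), hGtend.eventually evG] with t ht hevt
  have hct : 0 ≤ c*t := mul_nonneg hc0.le ht
  rw [(hGr t ht).2] at hevt
  by_contra hcon
  push_neg at hcon
  have h2 := Gfun_anti H (hGr (c*t) hct).1.1 hcon
  rw [(hGr (c*t) hct).2] at h2
  linarith

end GinvSec

end Stmt16Aux

open Stmt16Aux

theorem stmt16
    (b β q lam δ₁ : ℝ) (τ g g' x Ginv : ℝ → ℝ)
    -- hypotheses on g
    (hg0 : g 0 = 0)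
    (hgpos : ∀ y : ℝ, 0 < y → 0 < g y)
    (hgcont : ContinuousOn g (Set.Ici 0))
    (hδ₁ : 0 < δ₁)
    (hgderiv : ∀ y ∈ Set.Ioo (0:ℝ) δ₁, HasDerivAt g (g' y) y)
    (hg'cont : ContinuousOn g' (Set.Ioo 0 δ₁))
    (hg'pos : ∀ y ∈ Set.Ioo (0:ℝ) δ₁, 0 < g' y)
    (hβ : 1 < β)
    (hg'RV : RVatZero g' (β - 1))
    -- the inverse of G
    (hGinv_left : ∀ y ∈ Set.Ioc (0:ℝ) 1, Ginv (Gfun g y) = y)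
    (hGinv_right : ∀ z : ℝ, 0 ≤ z → Ginv z ∈ Set.Ioc (0:ℝ) 1 ∧ Gfun g (Ginv z) = z)
    -- hypotheses on x
    (hxcont : ContinuousOn x (Set.Ici 0))
    (hxpos : ∀ t : ℝ, 0 ≤ t → 0 < x t)
    (hx0 : Filter.Tendsto x Filter.atTop (nhds 0))
    (hlam : 0 < lam)
    (hliminf : (lam : EReal) ≤
      Filter.liminf (fun t => ((x t / Ginv t : ℝ) : EReal)) Filter.atTop)
    -- hypotheses on τ
    (hτcont : ContinuousOn τ (Set.Ici 0))
    (hτnn : ∀ t : ℝ, 0 ≤ t → 0 ≤ τ t)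
    (httau : Filter.Tendsto (fun t => t - τ t) Filter.atTop Filter.atTop)
    (hq0 : 0 < q) (hq1 : q < 1)
    (hτq : Filter.Tendsto (fun t => τ t / t) Filter.atTop (nhds q))
    (hbpos : 0 < b) :
    ((b * lam ^ β * (1 - q) ^ (-(β / (β - 1))) : ℝ) : EReal) ≤
      Filter.liminf
        (fun t => ((b * g (x (t - τ t)) / g (Ginv t) : ℝ) : EReal))
        Filter.atTop := by
  have H : GHyp g g' β δ₁ :=
    ⟨hg0, hgpos, hgcont, hδ₁, hgderiv, hg'cont, hg'pos, hβ, hg'RV⟩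
  set K : ℝ := b * lam ^ β * (1 - q) ^ (-(β / (β - 1))) with hK_def
  set L := Filter.liminf
      (fun t => ((b * g (x (t - τ t)) / g (Ginv t) : ℝ) : EReal)) Filter.atTop with hL_def
  have hβ1 : (0:ℝ) < β - 1 := by linarith
  have hq' : (0:ℝ) < 1 - q := by linarith
  -- main claim
  have main : ∀ r : ℝ, r < K → ((r : ℝ) : EReal) ≤ L := by
    intro r hrK
    -- the constant function of ε
    set μf : ℝ → ℝ := fun ε => ((1-ε)/((1-q)*(1+ε))) ^ (1/(β-1)) with hμf_def
    set D : ℝ := (1-q) ^ (-(1/(β-1))) with hD_def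
    have hD0 : 0 < D := rpow_pos_of_pos hq' _
    have hD1 : 1 < D := by
      rw [hD_def, Real.one_lt_rpow_iff_of_pos hq']
      right
      constructor
      · linarith
      · rw [neg_lt, neg_zero]
        positivity
    have hμtend : Tendsto μf (𝓝 0) (𝓝 D) := by
      have hinner : Tendsto (fun ε : ℝ => (1-ε)/((1-q)*(1+ε))) (𝓝 0) (𝓝 ((1-q)⁻¹)) := by
        have hca : ContinuousAt (fun ε : ℝ => (1-ε)/((1-q)*(1+ε))) 0 := by
          apply ContinuousAt.div (by fun_prop) (by fun_prop)
          norm_num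
          linarith
        have h : Tendsto (fun ε : ℝ => (1-ε)/((1-q)*(1+ε))) (𝓝 0)
            (𝓝 ((1-(0:ℝ))/((1-q)*(1+0)))) := hca.tendsto
        rwa [show (1-(0:ℝ))/((1-q)*(1+0)) = (1-q)⁻¹ by norm_num] at h
      have hout : ContinuousAt (fun w : ℝ => w ^ (1/(β-1))) ((1-q)⁻¹) :=
        Real.continuousAt_rpow_const _ _ (Or.inl (by positivity))
      have h2 := hout.tendsto.comp hinner
      have h3 : ((1-q)⁻¹) ^ (1/(β-1)) = D := by
        rw [hD_def, ← Real.rpow_neg_one (1-q), ← Real.rpow_mul hq'.le]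
        congr 1
        ring
      rwa [h3] at h2
    have hBtend : Tendsto (fun ε => b * (lam*(1-ε)) ^ β * (μf ε) ^ β * (1-ε)^2)
        (𝓝 0) (𝓝 K) := by
      have h1 : Tendsto (fun ε : ℝ => (lam*(1-ε)) ^ β) (𝓝 0) (𝓝 (lam ^ β)) := by
        have hin : Tendsto (fun ε : ℝ => lam*(1-ε)) (𝓝 0) (𝓝 lam) := by
          have : ContinuousAt (fun ε : ℝ => lam*(1-ε)) 0 := by fun_prop
          have h := this.tendsto
          norm_num at h
          exact h
        have hout : ContinuousAt (fun w : ℝ => w ^ β) lam :=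
          Real.continuousAt_rpow_const _ _ (Or.inl hlam.ne')
        exact hout.tendsto.comp hin
      have h2 : Tendsto (fun ε : ℝ => (μf ε) ^ β) (𝓝 0) (𝓝 (D ^ β)) := by
        have hout : ContinuousAt (fun w : ℝ => w ^ β) D :=
          Real.continuousAt_rpow_const _ _ (Or.inl hD0.ne')
        exact hout.tendsto.comp hμtend
      have h3 : Tendsto (fun ε : ℝ => (1-ε)^2) (𝓝 (0:ℝ)) (𝓝 1) := by
        have : ContinuousAt (fun ε : ℝ => (1-ε)^2) 0 := by fun_prop
        have h := this.tendsto
        norm_num at h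
        exact h
      have h4 := (((tendsto_const_nhds (x := b)).mul h1).mul h2).mul h3
      have h5 : b * lam ^ β * D ^ β * 1 = K := by
        rw [hK_def, hD_def, ← Real.rpow_mul hq'.le]
        rw [show -(1/(β-1))*β = -(β/(β-1)) by ring]
        ring
      rwa [h5] at h4
    -- choose ε
    have hev : ∀ᶠ ε in 𝓝[>] (0:ℝ),
        (r < b * (lam*(1-ε)) ^ β * (μf ε) ^ β * (1-ε)^2) ∧ (1 < μf ε) ∧
          ((1-q)*(1+ε) < 1) ∧ (ε < 1) := by
      have e1 := hBtend.eventually (eventually_gt_nhds hrK)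
      have e2 := hμtend.eventually (eventually_gt_nhds hD1)
      have e3 : ∀ᶠ ε in 𝓝 (0:ℝ), (1-q)*(1+ε) < 1 := by
        have hc : ContinuousAt (fun ε : ℝ => (1-q)*(1+ε)) 0 := by fun_prop
        have h := hc.tendsto
        norm_num at h
        exact h.eventually (eventually_lt_nhds (by linarith))
      have e4 : ∀ᶠ ε in 𝓝 (0:ℝ), ε < 1 := eventually_lt_nhds one_pos
      exact (((e1.and e2).and (e3.and e4)).filter_mono nhdsWithin_le_nhds).mono
        (fun ε hε => ⟨hε.1.1, hε.1.2, hε.2.1, hε.2.2⟩)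
    obtain ⟨ε, hεgood, hε0⟩ := (hev.and self_mem_nhdsWithin).exists
    have hε0' : (0:ℝ) < ε := hε0
    obtain ⟨hrB, hμ1, hc1, hε1⟩ := hεgood
    set c₁ : ℝ := lam*(1-ε) with hc₁_def
    have hc₁0 : 0 < c₁ := by
      rw [hc₁_def]; exact mul_pos hlam (by linarith)
    set cc : ℝ := (1-q)*(1+ε) with hcc_def
    have hcc0 : 0 < cc := by rw [hcc_def]; positivity
    set μ : ℝ := μf ε with hμ_def
    have hμ0 : 0 < μ := lt_trans one_pos hμ1
    have hX : (0:ℝ) < (1-ε)/cc := div_pos (by linarith) hcc0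
    have hkey : μ ^ (β-1) * cc < 1 := by
      have h1 : μ ^ (β-1) = (1-ε)/cc := by
        rw [hμ_def, hμf_def]
        rw [← Real.rpow_mul hX.le, one_div, inv_mul_cancel₀ hβ1.ne', Real.rpow_one]
      rw [h1, div_mul_cancel₀ _ hcc0.ne']
      linarith
    have hB_eq : b * c₁ ^ β * μ ^ β * (1-ε)^2 = b * (lam*(1-ε)) ^ β * (μf ε) ^ β * (1-ε)^2 := rfl
    -- eventual statements in t
    have hGinvT := Ginv_tendsto H hGinv_right
    have hGinvS : Tendsto (fun t => Ginv (t - τ t)) atTop (𝓝[>] (0:ℝ)) :=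
      hGinvT.comp httau
    have hctT : Tendsto (fun t : ℝ => cc*t) atTop atTop := by
      exact Tendsto.const_mul_atTop hcc0 tendsto_id
    have hGinvCT : Tendsto (fun t => Ginv (cc*t)) atTop (𝓝[>] (0:ℝ)) :=
      hGinvT.comp hctT
    have hmonog : MonotoneOn g (Ioo 0 δ₁) := (g_mono H).monotoneOn
    -- E4
    have hE4 : ∀ᶠ t in atTop, c₁ < x (t - τ t) / Ginv (t - τ t) := by
      have hlt : ((c₁ : ℝ) : EReal) < liminf (fun t => ((x t / Ginv t : ℝ) : EReal)) atTop := by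
        apply lt_of_lt_of_le _ hliminf
        rw [EReal.coe_lt_coe_iff, hc₁_def]
        nlinarith
      have := eventually_lt_of_lt_liminf hlt
      have h2 := httau.eventually this
      filter_upwards [h2] with t ht
      exact EReal.coe_lt_coe_iff.1 ht
    -- E5
    have hE5 : ∀ᶠ t in atTop, x (t - τ t) < δ₁ :=
      httau.eventually (hx0.eventually (eventually_lt_nhds hδ₁))
    -- E3
    have hE3 : ∀ᶠ t in atTop, t - τ t ≤ cc * t := by
      have h1 : q - (1-q)*ε < q := by nlinarith
      filter_upwards [hτq.eventually (eventually_gt_nhds h1), eventually_gt_atTop (0:ℝ)]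
        with t hq2 ht0
      rw [lt_div_iff₀ ht0] at hq2
      rw [hcc_def]
      nlinarith
    -- E6
    have hE6a : ∀ᶠ t in atTop,
        c₁ ^ β * (1-ε) * g (Ginv (t - τ t)) ≤ g (c₁ * Ginv (t - τ t)) :=
      hGinvS.eventually (g_ratio_lower_ev H hc₁0 hε0')
    have hE6b : ∀ᶠ t in atTop, μ ^ β * (1-ε) * g (Ginv t) ≤ g (μ * Ginv t) :=
      hGinvT.eventually (g_ratio_lower_ev H hμ0 hε0')
    -- E7
    have hE7 : ∀ᶠ t in atTop, μ * Ginv t ≤ Ginv (cc*t) :=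
      Ginv_ratio H hGinv_right hcc0 hc1 hμ1 hkey
    -- E8
    have hE8a : ∀ᶠ t in atTop, Ginv (t - τ t) < δ₁ := by
      have h1 : ∀ᶠ y in 𝓝[>] (0:ℝ), y < δ₁ := by
        filter_upwards [Ioo_mem_nhdsGT_of_mem (⟨le_refl _, hδ₁⟩ : (0:ℝ) ∈ Ico 0 δ₁)]
          with y hy using hy.2
      exact hGinvS.eventually h1
    have hE8b : ∀ᶠ t in atTop, Ginv (cc*t) < δ₁ := by
      have h1 : ∀ᶠ y in 𝓝[>] (0:ℝ), y < δ₁ := by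
        filter_upwards [Ioo_mem_nhdsGT_of_mem (⟨le_refl _, hδ₁⟩ : (0:ℝ) ∈ Ico 0 δ₁)]
          with y hy using hy.2
      exact hGinvCT.eventually h1
    -- assemble
    have hfinal : ∀ᶠ t in atTop,
        ((r : ℝ) : EReal) ≤ ((b * g (x (t - τ t)) / g (Ginv t) : ℝ) : EReal) := by
      filter_upwards [eventually_ge_atTop (0:ℝ), httau.eventually (eventually_ge_atTop (0:ℝ)),
        hE3, hE4, hE5, hE6a, hE6b, hE7, hE8a, hE8b] with t ht0 hs0 hsc hxr hxδ h6a h6b h7 h8a h8b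
      set s : ℝ := t - τ t with hs_def
      have hGs := hGinv_right s hs0
      have hGt := hGinv_right t ht0
      have hGct := hGinv_right (cc*t) (mul_nonneg hcc0.le ht0)
      have hGs0 : 0 < Ginv s := hGs.1.1
      have hGt0 : 0 < Ginv t := hGt.1.1
      have hGct0 : 0 < Ginv (cc*t) := hGct.1.1
      have hxs0 : 0 < x s := hxpos s hs0
      have hgGt : 0 < g (Ginv t) := hgpos _ hGt0
      -- step: c₁ * Ginv s ≤ x s
      have hstep1 : c₁ * Ginv s ≤ x s := by
        rw [lt_div_iff₀ hGs0] at hxr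
        linarith
      -- monotonicity 1
      have hmono1 : g (c₁ * Ginv s) ≤ g (x s) := by
        apply hmonog _ _ hstep1
        · exact ⟨mul_pos hc₁0 hGs0, lt_of_le_of_lt hstep1 hxδ⟩
        · exact ⟨hxs0, hxδ⟩
      -- monotonicity 2 : Ginv (cc*t) ≤ Ginv s
      have hanti : Ginv (cc*t) ≤ Ginv s := Ginv_anti H hGinv_right hs0 hsc
      have hmono2 : g (Ginv (cc*t)) ≤ g (Ginv s) := by
        apply hmonog _ _ hanti
        · exact ⟨hGct0, lt_of_le_of_lt hanti h8a⟩
        · exact ⟨hGs0, h8a⟩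
      -- monotonicity 3 : μ * Ginv t ≤ Ginv (cc*t)
      have hmono3 : g (μ * Ginv t) ≤ g (Ginv (cc*t)) := by
        apply hmonog _ _ h7
        · exact ⟨mul_pos hμ0 hGt0, lt_of_le_of_lt h7 h8b⟩
        · exact ⟨hGct0, h8b⟩
      -- chain
      have hcoef1 : (0:ℝ) ≤ c₁ ^ β * (1-ε) := by
        apply mul_nonneg (rpow_pos_of_pos hc₁0 _).le
        linarith
      have hchain : b * c₁ ^ β * μ ^ β * (1-ε)^2 * g (Ginv t) ≤ b * g (x s) := by
        have t1 : μ ^ β * (1-ε) * g (Ginv t) ≤ g (Ginv s) :=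
          le_trans h6b (le_trans hmono3 hmono2)
        have t2 : c₁ ^ β * (1-ε) * (μ ^ β * (1-ε) * g (Ginv t)) ≤
            c₁ ^ β * (1-ε) * g (Ginv s) := mul_le_mul_of_nonneg_left t1 hcoef1
        have t3 : c₁ ^ β * (1-ε) * g (Ginv s) ≤ g (x s) := le_trans h6a hmono1
        have t4 : c₁ ^ β * (1-ε) * (μ ^ β * (1-ε) * g (Ginv t)) ≤ g (x s) :=
          le_trans t2 t3
        calc b * c₁ ^ β * μ ^ β * (1-ε)^2 * g (Ginv t)
            = b * (c₁ ^ β * (1-ε) * (μ ^ β * (1-ε) * g (Ginv t))) := by ring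
          _ ≤ b * g (x s) := mul_le_mul_of_nonneg_left t4 hbpos.le
      have hrb' : r < b * c₁ ^ β * μ ^ β * (1-ε)^2 := by rw [hB_eq]; exact hrB
      have hdiv : r ≤ b * g (x s) / g (Ginv t) := by
        rw [le_div_iff₀ hgGt]
        calc r * g (Ginv t) ≤ (b * c₁ ^ β * μ ^ β * (1-ε)^2) * g (Ginv t) :=
              mul_le_mul_of_nonneg_right hrb'.le hgGt.le
          _ ≤ b * g (x s) := hchain
      exact EReal.coe_le_coe_iff.2 hdiv
    -- liminf
    rw [hL_def]
    calc ((r:ℝ) : EReal) = liminf (fun _ : ℝ => ((r:ℝ) : EReal)) atTop := (liminf_const _).symm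
      _ ≤ _ := liminf_le_liminf hfinal
  -- conclude
  by_contra hcon
  push_neg at hcon
  obtain ⟨z, hz1, hz2⟩ := exists_between hcon
  have hzt : z ≠ ⊤ := ne_top_of_lt hz2
  have hzb : z ≠ ⊥ := ne_bot_of_gt hz1
  have hzr : ((z.toReal : ℝ) : EReal) = z := EReal.coe_toReal hzt hzb
  have h1 : z.toReal < K := by
    rw [← EReal.coe_lt_coe_iff, hzr]
    exact hz2
  have h2 := main z.toReal h1
  rw [hzr] at h2
  exact absurd h2 (not_le.2 hz1)
end

section
/- Let α > 0 and let g : (0,1] → (0,∞) be continuous and such that lim_{x→0+} g(x)·e^{1/x^α} = 1. Define G(x) = ∫_x^1 du/g(u) for x ∈ (0,1]; then G is strictly decreasing with G(1) = 0 and G(x) → ∞ as x → 0+, and its inverse G⁻¹ : [0,∞) → (0,1] satisfies: (i) lim_{y→∞} G⁻¹(y)·(log y)^{1/α} = 1; (ii) G⁻¹ ∈ RV_∞(0); (iii) the function Γ := g∘G⁻¹ satisfies lim_{y→∞} Γ(y)·y·(log y)^{(α+1)/α} = 1/α and Γ ∈ RV_∞(−1). -/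
open Filter Set Real MeasureTheory

/-- `f` is regularly varying at infinity with index `α`. -/
def RVatTop (f : ℝ → ℝ) (α : ℝ) : Prop :=
  ∀ lam : ℝ, 0 < lam →
    Filter.Tendsto (fun t => f (lam * t) / f t) Filter.atTop (nhds (lam ^ α))

lemma s19hasDerivAt_psi (α : ℝ) {u : ℝ} (hu : 0 < u) :
    HasDerivAt (fun y : ℝ => y ^ (α+1) * Real.exp (1 / y ^ α))
      (Real.exp (1 / u ^ α) * ((α+1) * u ^ α - α)) u := by
  have h1 : HasDerivAt (fun y : ℝ => y ^ (α+1)) ((α+1) * u ^ α) u := by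
    have := Real.hasDerivAt_rpow_const (x := u) (p := α+1) (Or.inl hu.ne')
    simpa [add_sub_cancel_right] using this
  have h3 : HasDerivAt (fun y : ℝ => y ^ (-α)) ((-α) * u ^ (-α - 1)) u := by
    simpa using Real.hasDerivAt_rpow_const (x := u) (p := -α) (Or.inl hu.ne')
  have h2 : HasDerivAt (fun y : ℝ => 1 / y ^ α) ((-α) * u ^ (-α - 1)) u := by
    refine h3.congr_of_eventuallyEq ?_
    filter_upwards [eventually_gt_nhds hu] with y hy
    rw [Real.rpow_neg hy.le, one_div]
  have h4 : HasDerivAt (fun y : ℝ => y ^ (α+1) * Real.exp (1 / y ^ α)) _ u := h1.mul h2.exp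
  convert h4 using 1
  have key : u ^ (α+1) * u ^ (-α - 1) = 1 := by
    rw [← Real.rpow_add hu]
    norm_num
  have h5 : (1:ℝ) / u ^ α = u ^ (-α) := by rw [Real.rpow_neg hu.le, one_div]
  set E := Real.exp (1 / u ^ α)
  linear_combination (α * E) * key

lemma s19rpow_tendsto_zero {α : ℝ} (hα : 0 < α) :
    Tendsto (fun y : ℝ => y ^ α) (nhdsWithin 0 (Set.Ioi 0)) (nhdsWithin 0 (Set.Ioi 0)) := by
  rw [tendsto_nhdsWithin_iff]
  constructor
  · have h := (Real.continuousAt_rpow_const 0 α (Or.inr hα.le)).tendsto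
    rw [Real.zero_rpow hα.ne'] at h
    exact h.mono_left nhdsWithin_le_nhds
  · filter_upwards [self_mem_nhdsWithin] with y hy
    exact Real.rpow_pos_of_pos hy α

lemma s19inv_rpow_tendsto_atTop {α : ℝ} (hα : 0 < α) :
    Tendsto (fun y : ℝ => y ^ (-α)) (nhdsWithin 0 (Set.Ioi 0)) atTop := by
  have h := (s19rpow_tendsto_zero hα).inv_tendsto_nhdsGT_zero
  refine h.congr' ?_
  filter_upwards [self_mem_nhdsWithin] with y hy
  simp [Real.rpow_neg (le_of_lt hy)]

lemma s19exp_inv_tendsto_atTop {α : ℝ} (hα : 0 < α) :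
    Tendsto (fun y : ℝ => Real.exp (1 / y ^ α)) (nhdsWithin 0 (Set.Ioi 0)) atTop := by
  have h := Real.tendsto_exp_atTop.comp (s19inv_rpow_tendsto_atTop hα)
  refine h.congr' ?_
  filter_upwards [self_mem_nhdsWithin] with y hy
  simp [Function.comp, Real.rpow_neg (le_of_lt hy), one_div]

lemma s19psi_tendsto_atTop {α : ℝ} (hα : 0 < α) :
    Tendsto (fun y : ℝ => y ^ (α+1) * Real.exp (1 / y ^ α)) (nhdsWithin 0 (Set.Ioi 0)) atTop := by
  have h := (tendsto_exp_div_rpow_atTop ((α+1)/α)).comp (s19inv_rpow_tendsto_atTop hα)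
  refine h.congr' ?_
  filter_upwards [self_mem_nhdsWithin] with y hy
  have hy0 : (0:ℝ) ≤ y := hy.le
  have e1 : (y ^ (-α) : ℝ) ^ ((α+1)/α) = y ^ (-(α+1)) := by
    rw [← Real.rpow_mul hy0]
    congr 1
    field_simp
  have e2 : (1:ℝ) / y ^ α = y ^ (-α) := by rw [Real.rpow_neg hy0, one_div]
  simp only [Function.comp, e1, e2]
  rw [Real.rpow_neg hy0 (α+1), div_inv_eq_mul, mul_comm]

lemma s19logratio {lam : ℝ} (hlam : 0 < lam) (β : ℝ) :
    Tendsto (fun z : ℝ => Real.log (lam * z) ^ β / Real.log z ^ β) atTop (nhds 1) := by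
  have hmul : Tendsto (fun z : ℝ => lam * z) atTop atTop :=
    Tendsto.const_mul_atTop hlam tendsto_id
  have hloglam : Tendsto (fun z : ℝ => Real.log (lam * z)) atTop atTop :=
    Real.tendsto_log_atTop.comp hmul
  have hratio : Tendsto (fun z : ℝ => Real.log (lam * z) / Real.log z) atTop (nhds 1) := by
    have h1 : Tendsto (fun z : ℝ => Real.log lam / Real.log z + 1) atTop (nhds (0 + 1)) :=
      (tendsto_const_nhds.div_atTop Real.tendsto_log_atTop).add tendsto_const_nhds
    rw [zero_add] at h1
    refine h1.congr' ?_
    filter_upwards [Real.tendsto_log_atTop.eventually_gt_atTop 0,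
      eventually_gt_atTop 0] with z hz hz0
    rw [Real.log_mul hlam.ne' hz0.ne', add_div, div_self hz.ne']
  have hcont : ContinuousAt (fun x : ℝ => x ^ β) 1 :=
    Real.continuousAt_rpow_const 1 β (Or.inl one_ne_zero)
  have h2 : Tendsto (fun z : ℝ => (Real.log (lam * z) / Real.log z) ^ β) atTop (nhds 1) := by
    have := hcont.tendsto.comp hratio
    rwa [Real.one_rpow] at this
  refine h2.congr' ?_
  filter_upwards [Real.tendsto_log_atTop.eventually_ge_atTop 0,
    hloglam.eventually_ge_atTop 0] with z hz hzl
  exact Real.div_rpow hzl hz β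

variable {g : ℝ → ℝ}

lemma s19ginv_contOn (hgcont : ContinuousOn g (Set.Ioc 0 1))
    (hgpos : ∀ y ∈ Set.Ioc (0:ℝ) 1, 0 < g y) :
    ContinuousOn (fun u => 1 / g u) (Set.Ioc 0 1) :=
  continuousOn_const.div hgcont (fun y hy => (hgpos y hy).ne')

lemma s19intble (hgcont : ContinuousOn g (Set.Ioc 0 1))
    (hgpos : ∀ y ∈ Set.Ioc (0:ℝ) 1, 0 < g y) {a b : ℝ}
    (ha : a ∈ Set.Ioc (0:ℝ) 1) (hb : b ∈ Set.Ioc (0:ℝ) 1) :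
    IntervalIntegrable (fun u => 1 / g u) volume a b :=
  ((s19ginv_contOn hgcont hgpos).mono
    (Set.ordConnected_Ioc.uIcc_subset ha hb)).intervalIntegrable

lemma s19Gsub (hgcont : ContinuousOn g (Set.Ioc 0 1))
    (hgpos : ∀ y ∈ Set.Ioc (0:ℝ) 1, 0 < g y) {a b : ℝ}
    (ha : a ∈ Set.Ioc (0:ℝ) 1) (hb : b ∈ Set.Ioc (0:ℝ) 1) :
    Gfun g a = (∫ u in a..b, 1 / g u) + Gfun g b := by
  rw [Gfun, ← intervalIntegral.integral_add_adjacent_intervals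
    (s19intble hgcont hgpos ha hb) (s19intble hgcont hgpos hb (by norm_num))]
  rfl

lemma s19GstrictAnti (hgcont : ContinuousOn g (Set.Ioc 0 1))
    (hgpos : ∀ y ∈ Set.Ioc (0:ℝ) 1, 0 < g y) :
    StrictAntiOn (Gfun g) (Set.Ioc 0 1) := by
  intro a ha b hb hab
  have h := s19Gsub hgcont hgpos ha hb
  have hpos : 0 < ∫ u in a..b, 1 / g u := by
    refine intervalIntegral.intervalIntegral_pos_of_pos_on
      (s19intble hgcont hgpos ha hb) (fun x hx => ?_) hab
    have hx1 : x ∈ Set.Ioc (0:ℝ) 1 := ⟨ha.1.trans hx.1, hx.2.le.trans hb.2⟩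
    exact div_pos one_pos (hgpos x hx1)
  linarith

lemma s19Gone : Gfun g 1 = 0 := intervalIntegral.integral_same

lemma s19Gnonneg (hgcont : ContinuousOn g (Set.Ioc 0 1))
    (hgpos : ∀ y ∈ Set.Ioc (0:ℝ) 1, 0 < g y) {y : ℝ}
    (hy : y ∈ Set.Ioc (0:ℝ) 1) : 0 ≤ Gfun g y := by
  rcases eq_or_lt_of_le hy.2 with h | h
  · rw [h, s19Gone]
  · have := s19GstrictAnti hgcont hgpos hy (by norm_num : (1:ℝ) ∈ Set.Ioc (0:ℝ) 1) h
    rw [s19Gone] at this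
    linarith

lemma s19GcontIcc (hgcont : ContinuousOn g (Set.Ioc 0 1))
    (hgpos : ∀ y ∈ Set.Ioc (0:ℝ) 1, 0 < g y) {a : ℝ}
    (ha : a ∈ Set.Ioc (0:ℝ) 1) :
    ContinuousOn (Gfun g) (Set.Icc a 1) := by
  have hsub : Set.Icc a 1 ⊆ Set.Ioc (0:ℝ) 1 := fun x hx => ⟨lt_of_lt_of_le ha.1 hx.1, hx.2⟩
  have hint : IntegrableOn (fun u => 1 / g u) (Set.uIcc a 1) volume := by
    rw [Set.uIcc_of_le ha.2]
    exact ((s19ginv_contOn hgcont hgpos).mono hsub).integrableOn_Icc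
  have hprim := intervalIntegral.continuousOn_primitive_interval (f := fun u => 1 / g u)
    (a := a) (b := 1) (μ := volume) hint
  have heq : ∀ y ∈ Set.Icc a 1,
      Gfun g y = (∫ u in a..(1:ℝ), 1 / g u) - ∫ u in a..y, 1 / g u := by
    intro y hy
    have h1 := intervalIntegral.integral_add_adjacent_intervals
      (s19intble hgcont hgpos ha (hsub hy)) (s19intble hgcont hgpos (hsub hy) ⟨one_pos, le_refl 1⟩)
    rw [Gfun]
    linarith
  have : ContinuousOn (fun y => (∫ u in a..(1:ℝ), 1 / g u) - ∫ u in a..y, 1 / g u)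
      (Set.Icc a 1) := by
    refine continuousOn_const.sub ?_
    rwa [Set.uIcc_of_le ha.2] at hprim
  exact this.congr heq

set_option maxHeartbeats 1000000 in
lemma s19L1 {α : ℝ} (hα : 0 < α) {g : ℝ → ℝ}
    (hgcont : ContinuousOn g (Set.Ioc 0 1))
    (hgpos : ∀ y ∈ Set.Ioc (0:ℝ) 1, 0 < g y)
    (hgasy : Tendsto (fun y => g y * Real.exp (1 / y ^ α))
      (nhdsWithin 0 (Set.Ioi 0)) (nhds 1)) :
    Tendsto (fun y => Gfun g y * α / (y ^ (α+1) * Real.exp (1 / y ^ α)))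
      (nhdsWithin 0 (Set.Ioi 0)) (nhds 1) := by
  set ψ : ℝ → ℝ := fun y => y ^ (α+1) * Real.exp (1 / y ^ α) with hψdef
  have hψpos : ∀ y : ℝ, 0 < y → 0 < ψ y := fun y hy =>
    mul_pos (Real.rpow_pos_of_pos hy _) (Real.exp_pos _)
  have hψtop : Tendsto ψ (nhdsWithin 0 (Set.Ioi 0)) atTop := s19psi_tendsto_atTop hα
  have hψinv : Tendsto (fun y => (ψ y)⁻¹) (nhdsWithin 0 (Set.Ioi 0)) (nhds 0) :=
    hψtop.inv_tendsto_atTop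
  rw [Metric.tendsto_nhds]
  intro ε hε
  set ε₁ : ℝ := min (ε/5) (1/5) with hε₁def
  have hε₁pos : 0 < ε₁ := lt_min (by linarith) (by norm_num)
  have hε₁a : ε₁ ≤ ε/5 := min_le_left _ _
  have hε₁b : ε₁ ≤ 1/5 := min_le_right _ _
  have hlo : 1 - ε < 1/(1+ε₁) := by
    rw [lt_div_iff₀ (by linarith)]
    nlinarith
  have h1ε : (0:ℝ) < 1 - ε₁ := by linarith
  have hhi : 1/((1-ε₁)*(1-ε₁)) < 1+ε := by
    rw [div_lt_iff₀ (by positivity)]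
    nlinarith [mul_le_mul_of_nonneg_left hε₁b hε.le, mul_nonneg hε₁pos.le hε₁pos.le,
      mul_nonneg hε.le (mul_nonneg hε₁pos.le hε₁pos.le)]
  obtain ⟨δ₀, hδ₀pos, hδ₀⟩ := Metric.tendsto_nhdsWithin_nhds.mp hgasy ε₁ hε₁pos
  have hev : ∀ᶠ t in nhdsWithin 0 (Set.Ioi (0:ℝ)),
      ((α+1) * t ^ α < α * ε₁ ∧ t < δ₀) ∧ (t ≤ 1 ∧ 0 < t) := by
    have h1 : Tendsto (fun t : ℝ => (α+1) * t ^ α) (nhdsWithin 0 (Set.Ioi 0)) (nhds 0) := by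
      have := ((s19rpow_tendsto_zero hα).mono_right nhdsWithin_le_nhds).const_mul (α+1)
      simpa using this
    refine (((h1.eventually (eventually_lt_nhds (by positivity : (0:ℝ) < α * ε₁))).and
      (eventually_nhdsWithin_of_eventually_nhds (eventually_lt_nhds hδ₀pos))).and
      ((eventually_nhdsWithin_of_eventually_nhds (eventually_le_nhds (by norm_num : (0:ℝ) < 1))).and
      self_mem_nhdsWithin))
  obtain ⟨δ, ⟨hδ1, hδ2⟩, hδ3, hδ4⟩ := hev.exists
  have hδIoc : δ ∈ Set.Ioc (0:ℝ) 1 := ⟨hδ4, hδ3⟩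
  -- key sandwich
  have key : ∀ y : ℝ, 0 < y → y < δ →
      (ψ y - ψ δ)/(α*(1+ε₁)) + Gfun g δ ≤ Gfun g y ∧
      Gfun g y ≤ (ψ y - ψ δ)/(α*((1-ε₁)*(1-ε₁))) + Gfun g δ := by
    intro y hy hyδ
    have hyIoc : y ∈ Set.Ioc (0:ℝ) 1 := ⟨hy, hyδ.le.trans hδ3⟩
    have hGs := s19Gsub hgcont hgpos hyIoc hδIoc
    have hposIcc : ∀ u ∈ Set.Icc y δ, 0 < u := fun u hu => lt_of_lt_of_le hy hu.1
    have hcontE : ContinuousOn (fun u : ℝ => Real.exp (1 / u ^ α)) (Set.Icc y δ) := by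
      refine Real.continuous_exp.comp_continuousOn ?_
      refine continuousOn_const.div ?_ ?_
      · exact ContinuousOn.rpow_const continuousOn_id
          (fun u hu => Or.inl (hposIcc u hu).ne')
      · exact fun u hu => (Real.rpow_pos_of_pos (hposIcc u hu) α).ne'
    have hcontP : ContinuousOn (fun u : ℝ => (α+1) * u ^ α - α) (Set.Icc y δ) := by
      refine ContinuousOn.sub (continuousOn_const.mul ?_) continuousOn_const
      exact ContinuousOn.rpow_const continuousOn_id (fun u hu => Or.inl (hposIcc u hu).ne')
    have hψ'int : IntervalIntegrable
        (fun u : ℝ => Real.exp (1 / u ^ α) * ((α+1) * u ^ α - α)) volume y δ := by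
      refine ContinuousOn.intervalIntegrable ?_
      rw [Set.uIcc_of_le hyδ.le]
      exact hcontE.mul hcontP
    have hftc : ∫ u in y..δ, Real.exp (1 / u ^ α) * ((α+1) * u ^ α - α) = ψ δ - ψ y := by
      exact intervalIntegral.integral_eq_sub_of_hasDerivAt
        (fun u hu => s19hasDerivAt_psi α (by
          rw [Set.uIcc_of_le hyδ.le] at hu; exact hposIcc u hu)) hψ'int
    have hftc' : ∫ u in y..δ, Real.exp (1 / u ^ α) * (α - (α+1) * u ^ α) = ψ y - ψ δ := by
      have : (fun u : ℝ => Real.exp (1 / u ^ α) * (α - (α+1) * u ^ α))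
          = fun u => -(Real.exp (1 / u ^ α) * ((α+1) * u ^ α - α)) := by
        funext u; ring
      rw [this, intervalIntegral.integral_neg, hftc]; ring
    have hnint : IntervalIntegrable
        (fun u : ℝ => Real.exp (1 / u ^ α) * (α - (α+1) * u ^ α)) volume y δ := by
      refine ContinuousOn.intervalIntegrable ?_
      rw [Set.uIcc_of_le hyδ.le]
      exact hcontE.mul (continuousOn_const.sub (continuousOn_const.mul
        (ContinuousOn.rpow_const continuousOn_id (fun u hu => Or.inl (hposIcc u hu).ne'))))
    -- pointwise bounds
    have hbounds : ∀ u ∈ Set.Icc y δ,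
        (Real.exp (1 / u ^ α) * (α - (α+1) * u ^ α))/(α*(1+ε₁)) ≤ 1 / g u ∧
        1 / g u ≤ (Real.exp (1 / u ^ α) * (α - (α+1) * u ^ α))/(α*((1-ε₁)*(1-ε₁))) := by
      intro u hu
      have hu0 : 0 < u := hposIcc u hu
      have huIoc : u ∈ Set.Ioc (0:ℝ) 1 := ⟨hu0, hu.2.trans hδ3⟩
      have hgu : 0 < g u := hgpos u huIoc
      have hEpos : 0 < Real.exp (1 / u ^ α) := Real.exp_pos _
      have hdist : dist u 0 < δ₀ := by
        rw [Real.dist_eq, sub_zero, abs_of_pos hu0]; exact lt_of_le_of_lt hu.2 hδ2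
      have hgE := hδ₀ (Set.mem_Ioi.mpr hu0) hdist
      rw [Real.dist_eq] at hgE
      have hgE1 : 1 - ε₁ < g u * Real.exp (1 / u ^ α) := by
        have := abs_lt.mp hgE; linarith [this.1]
      have hgE2 : g u * Real.exp (1 / u ^ α) < 1 + ε₁ := by
        have := abs_lt.mp hgE; linarith [this.2]
      have hrpow : u ^ α ≤ δ ^ α := Real.rpow_le_rpow hu0.le hu.2 hα.le
      have hP1 : (α+1) * u ^ α ≤ α * ε₁ := by
        calc (α+1) * u ^ α ≤ (α+1) * δ ^ α := by
              apply mul_le_mul_of_nonneg_left hrpow (by linarith)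
          _ ≤ α * ε₁ := hδ1.le
      have hP0 : 0 ≤ u ^ α := (Real.rpow_pos_of_pos hu0 α).le
      set E : ℝ := Real.exp (1 / u ^ α) with hEdef
      constructor
      · calc E * (α - (α+1) * u ^ α) / (α*(1+ε₁))
            ≤ E * α / (α*(1+ε₁)) := by
              gcongr
              nlinarith
          _ = E / (1+ε₁) := by
              rw [mul_comm E α, mul_div_mul_left _ _ hα.ne']
          _ ≤ 1 / g u := by
              rw [div_le_div_iff₀ (by linarith) hgu]
              have : E * g u = g u * E := by ring
              linarith
      · have hnum : E * (α*(1-ε₁)) ≤ E * (α - (α+1) * u ^ α) := by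
          apply mul_le_mul_of_nonneg_left _ hEpos.le
          nlinarith
        calc 1 / g u ≤ E / (1-ε₁) := by
              rw [div_le_div_iff₀ hgu h1ε]
              have : E * g u = g u * E := by ring
              linarith
          _ = E * (α*(1-ε₁)) / (α*((1-ε₁)*(1-ε₁))) := by
              rw [div_eq_div_iff h1ε.ne' (mul_pos hα (mul_pos h1ε h1ε)).ne']
              ring
          _ ≤ E * (α - (α+1) * u ^ α) / (α*((1-ε₁)*(1-ε₁))) := by
              gcongr
    have hib := s19intble hgcont hgpos hyIoc hδIoc
    have hImono1 : (ψ y - ψ δ)/(α*(1+ε₁)) ≤ ∫ u in y..δ, 1 / g u := by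
      have := intervalIntegral.integral_mono_on hyδ.le
        ((hnint.div_const (α*(1+ε₁)))) hib (fun u hu => (hbounds u hu).1)
      rwa [intervalIntegral.integral_div, hftc'] at this
    have hImono2 : (∫ u in y..δ, 1 / g u) ≤ (ψ y - ψ δ)/(α*((1-ε₁)*(1-ε₁))) := by
      have := intervalIntegral.integral_mono_on hyδ.le
        hib ((hnint.div_const (α*((1-ε₁)*(1-ε₁))))) (fun u hu => (hbounds u hu).2)
      rwa [intervalIntegral.integral_div, hftc'] at this
    constructor <;> [linarith; linarith]
  -- conclude
  set lo : ℝ → ℝ := fun y => (1 - ψ δ * (ψ y)⁻¹)/(1+ε₁) + α * Gfun g δ * (ψ y)⁻¹ with hlodef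
  set hi : ℝ → ℝ := fun y => (1 - ψ δ * (ψ y)⁻¹)/((1-ε₁)*(1-ε₁)) + α * Gfun g δ * (ψ y)⁻¹
    with hhidef
  have hcont1 : Continuous (fun t : ℝ => (1 - ψ δ * t)/(1+ε₁) + α * Gfun g δ * t) := by
    fun_prop
  have hcont2 : Continuous (fun t : ℝ => (1 - ψ δ * t)/((1-ε₁)*(1-ε₁)) + α * Gfun g δ * t) := by
    fun_prop
  have hloT : Tendsto lo (nhdsWithin 0 (Set.Ioi 0)) (nhds (1/(1+ε₁))) := by
    have := (hcont1.tendsto 0).comp hψinv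
    simp only [mul_zero, sub_zero, add_zero, Function.comp] at this
    exact this
  have hhiT : Tendsto hi (nhdsWithin 0 (Set.Ioi 0)) (nhds (1/((1-ε₁)*(1-ε₁)))) := by
    have := (hcont2.tendsto 0).comp hψinv
    simp only [mul_zero, sub_zero, add_zero, Function.comp] at this
    exact this
  have hlo' := hloT.eventually (eventually_gt_nhds hlo)
  have hhi' := hhiT.eventually (eventually_lt_nhds hhi)
  have hδev : ∀ᶠ y in nhdsWithin 0 (Set.Ioi (0:ℝ)), y < δ :=
    eventually_nhdsWithin_of_eventually_nhds (eventually_lt_nhds hδ4)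
  have egen : ∀ d a b c : ℝ, 0 < d → a ≠ 0 →
      ((a - b)/(α*d) + c)*α/a = (1 - b*a⁻¹)/d + α*c*a⁻¹ := by
    intro d a b c hd ha
    field_simp
  have e1 : ∀ a b c : ℝ, a ≠ 0 →
      ((a - b)/(α*(1+ε₁)) + c)*α/a = (1 - b*a⁻¹)/(1+ε₁) + α*c*a⁻¹ :=
    fun a b c ha => egen (1+ε₁) a b c (by linarith) ha
  have e2 : ∀ a b c : ℝ, a ≠ 0 →
      ((a - b)/(α*((1-ε₁)*(1-ε₁))) + c)*α/a = (1 - b*a⁻¹)/((1-ε₁)*(1-ε₁)) + α*c*a⁻¹ :=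
    fun a b c ha => egen ((1-ε₁)*(1-ε₁)) a b c (mul_pos h1ε h1ε) ha
  filter_upwards [self_mem_nhdsWithin, hlo', hhi', hδev] with y hy hloy hhiy hyδ
  have hy0 : (0:ℝ) < y := hy
  have hψy := hψpos y hy0
  obtain ⟨k1, k2⟩ := key y hy0 hyδ
  have hm1 : (1 - ψ δ * (ψ y)⁻¹)/(1+ε₁) + α * Gfun g δ * (ψ y)⁻¹ ≤ Gfun g y * α / ψ y := by
    rw [← e1 (ψ y) (ψ δ) (Gfun g δ) hψy.ne']
    gcongr
  have hm2 : Gfun g y * α / ψ y ≤ (1 - ψ δ * (ψ y)⁻¹)/((1-ε₁)*(1-ε₁)) + α * Gfun g δ * (ψ y)⁻¹ := by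
    rw [← e2 (ψ y) (ψ δ) (Gfun g δ) hψy.ne']
    gcongr
  have hloy' : 1 - ε < (1 - ψ δ * (ψ y)⁻¹)/(1+ε₁) + α * Gfun g δ * (ψ y)⁻¹ := hloy
  have hhiy' : (1 - ψ δ * (ψ y)⁻¹)/((1-ε₁)*(1-ε₁)) + α * Gfun g δ * (ψ y)⁻¹ < 1 + ε := hhiy
  rw [Real.dist_eq, abs_lt]
  exact ⟨by linarith, by linarith⟩

lemma s19Gtop {α : ℝ} (hα : 0 < α) {g : ℝ → ℝ}
    (hgcont : ContinuousOn g (Set.Ioc 0 1))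
    (hgpos : ∀ y ∈ Set.Ioc (0:ℝ) 1, 0 < g y)
    (hgasy : Tendsto (fun y => g y * Real.exp (1 / y ^ α))
      (nhdsWithin 0 (Set.Ioi 0)) (nhds 1)) :
    Tendsto (Gfun g) (nhdsWithin 0 (Set.Ioi 0)) atTop := by
  have h1 := (s19L1 hα hgcont hgpos hgasy).pos_mul_atTop one_pos (s19psi_tendsto_atTop hα)
  have h2 := h1.atTop_mul_const (inv_pos.mpr hα)
  refine h2.congr' ?_
  filter_upwards [self_mem_nhdsWithin] with y hy
  have hψ : (0:ℝ) < y ^ (α+1) * Real.exp (1 / y ^ α) :=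
    mul_pos (Real.rpow_pos_of_pos hy _) (Real.exp_pos _)
  rw [div_mul_cancel₀ _ hψ.ne', mul_inv_cancel_right₀ hα.ne']

lemma s19L2 {α : ℝ} (hα : 0 < α) {g : ℝ → ℝ}
    (hgcont : ContinuousOn g (Set.Ioc 0 1))
    (hgpos : ∀ y ∈ Set.Ioc (0:ℝ) 1, 0 < g y)
    (hgasy : Tendsto (fun y => g y * Real.exp (1 / y ^ α))
      (nhdsWithin 0 (Set.Ioi 0)) (nhds 1)) :
    Tendsto (fun y => y ^ α * Real.log (Gfun g y)) (nhdsWithin 0 (Set.Ioi 0)) (nhds 1) := by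
  have hL1 := s19L1 hα hgcont hgpos hgasy
  have hGtop := s19Gtop hα hgcont hgpos hgasy
  have hrp : Tendsto (fun y : ℝ => y ^ α) (nhdsWithin 0 (Set.Ioi 0)) (nhds 0) :=
    (s19rpow_tendsto_zero hα).mono_right nhdsWithin_le_nhds
  have hlogr : Tendsto (fun y => Real.log (Gfun g y * α / (y ^ (α+1) * Real.exp (1 / y ^ α))))
      (nhdsWithin 0 (Set.Ioi 0)) (nhds 0) := by
    have := (Real.continuousAt_log one_ne_zero).tendsto.comp hL1
    simpa [Function.comp_def] using this
  have T1 : Tendsto (fun y => y ^ α * Real.log (Gfun g y * α / (y ^ (α+1) * Real.exp (1 / y ^ α))))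
      (nhdsWithin 0 (Set.Ioi 0)) (nhds 0) := by
    simpa using hrp.mul hlogr
  have T2 : Tendsto (fun y : ℝ => (α+1) * (Real.log y * y ^ α)) (nhdsWithin 0 (Set.Ioi 0)) (nhds 0) := by
    simpa using (tendsto_log_mul_rpow_nhdsGT_zero hα).const_mul (α+1)
  have T3 : Tendsto (fun y : ℝ => y ^ α * Real.log α) (nhdsWithin 0 (Set.Ioi 0)) (nhds 0) := by
    simpa using hrp.mul_const (Real.log α)
  have hsum : Tendsto (fun y =>
      y ^ α * Real.log (Gfun g y * α / (y ^ (α+1) * Real.exp (1 / y ^ α)))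
        + (α+1) * (Real.log y * y ^ α) + 1 - y ^ α * Real.log α)
      (nhdsWithin 0 (Set.Ioi 0)) (nhds 1) := by
    have := ((T1.add T2).add (tendsto_const_nhds (x := (1:ℝ)))).sub T3
    simpa using this
  refine hsum.congr' ?_
  filter_upwards [self_mem_nhdsWithin, hGtop.eventually_gt_atTop 0,
    hL1.eventually (eventually_gt_nhds (by norm_num : (1:ℝ)/2 < 1))] with y hy hG hr
  have hy0 : (0:ℝ) < y := hy
  have hψ : (0:ℝ) < y ^ (α+1) * Real.exp (1 / y ^ α) :=
    mul_pos (Real.rpow_pos_of_pos hy0 _) (Real.exp_pos _)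
  set r := Gfun g y * α / (y ^ (α+1) * Real.exp (1 / y ^ α)) with hrdef
  have hrpos : 0 < r := by linarith
  have hGeq : Gfun g y = r * (y ^ (α+1) * Real.exp (1 / y ^ α)) / α := by
    rw [hrdef]
    field_simp
  have hlogG : Real.log (Gfun g y) =
      Real.log r + ((α+1) * Real.log y + 1 / y ^ α) - Real.log α := by
    rw [hGeq, Real.log_div (mul_pos hrpos hψ).ne' hα.ne', Real.log_mul hrpos.ne' hψ.ne',
      Real.log_mul (Real.rpow_pos_of_pos hy0 _).ne' (Real.exp_ne_zero _), Real.log_rpow hy0, Real.log_exp]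
  rw [hlogG]
  have hcancel : y ^ α * (1 / y ^ α) = 1 := by
    rw [mul_one_div, div_self (Real.rpow_pos_of_pos hy0 α).ne']
  nlinarith [hcancel]

set_option maxHeartbeats 1000000 in
theorem stmt19
    (α : ℝ) (hα : 0 < α) (g : ℝ → ℝ)
    (hgcont : ContinuousOn g (Set.Ioc 0 1))
    (hgpos : ∀ y ∈ Set.Ioc (0:ℝ) 1, 0 < g y)
    (hgasy : Filter.Tendsto (fun y => g y * Real.exp (1 / y ^ α))
      (nhdsWithin 0 (Set.Ioi 0)) (nhds 1)) :
    StrictAntiOn (Gfun g) (Set.Ioc 0 1) ∧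
    Gfun g 1 = 0 ∧
    Filter.Tendsto (Gfun g) (nhdsWithin 0 (Set.Ioi 0)) Filter.atTop ∧
    ∃ Ginv : ℝ → ℝ,
      (∀ z : ℝ, 0 ≤ z → Ginv z ∈ Set.Ioc (0:ℝ) 1 ∧ Gfun g (Ginv z) = z) ∧
      (∀ y ∈ Set.Ioc (0:ℝ) 1, Ginv (Gfun g y) = y) ∧
      Filter.Tendsto (fun z => Ginv z * Real.log z ^ (1 / α))
        Filter.atTop (nhds 1) ∧
      RVatTop Ginv 0 ∧
      Filter.Tendsto
        (fun z => g (Ginv z) * z * Real.log z ^ ((α + 1) / α))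
        Filter.atTop (nhds (1 / α)) ∧
      RVatTop (fun z => g (Ginv z)) (-1) := by
  classical
  have hanti := s19GstrictAnti hgcont hgpos
  have hGtop := s19Gtop hα hgcont hgpos hgasy
  -- existence of the inverse
  have hex : ∀ z : ℝ, 0 ≤ z → ∃ y ∈ Set.Ioc (0:ℝ) 1, Gfun g y = z := by
    intro z hz
    obtain ⟨a, ⟨ha1, ha2⟩, haG⟩ :
        ∃ a : ℝ, (a ∈ Set.Ioi (0:ℝ) ∧ a ≤ 1) ∧ z ≤ Gfun g a := by
      have h1 : ∀ᶠ y in nhdsWithin 0 (Set.Ioi (0:ℝ)),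
          (y ∈ Set.Ioi (0:ℝ) ∧ y ≤ 1) ∧ z ≤ Gfun g y :=
        (eventually_mem_nhdsWithin.and (eventually_nhdsWithin_of_eventually_nhds
          (eventually_le_nhds one_pos))).and (hGtop.eventually_ge_atTop z)
      exact h1.exists
    have haIoc : a ∈ Set.Ioc (0:ℝ) 1 := ⟨ha1, ha2⟩
    have hIcc : z ∈ Set.Icc (Gfun g 1) (Gfun g a) := by
      rw [s19Gone]; exact ⟨hz, haG⟩
    obtain ⟨y, hy, hGy⟩ := intermediate_value_Icc' ha2 (s19GcontIcc hgcont hgpos haIoc) hIcc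
    exact ⟨y, ⟨lt_of_lt_of_le ha1 hy.1, hy.2⟩, hGy⟩
  set Ginv : ℝ → ℝ :=
    fun z => if h : ∃ y ∈ Set.Ioc (0:ℝ) 1, Gfun g y = z then h.choose else 1 with hGinvdef
  have P1 : ∀ z : ℝ, 0 ≤ z → Ginv z ∈ Set.Ioc (0:ℝ) 1 ∧ Gfun g (Ginv z) = z := by
    intro z hz
    have h := hex z hz
    rw [hGinvdef]
    simp only [dif_pos h]
    exact ⟨h.choose_spec.1, h.choose_spec.2⟩
  have P2 : ∀ y ∈ Set.Ioc (0:ℝ) 1, Ginv (Gfun g y) = y := by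
    intro y hy
    have hz : 0 ≤ Gfun g y := by
      rcases eq_or_lt_of_le hy.2 with h | h
      · rw [h, s19Gone]
      · have := hanti hy ⟨one_pos, le_refl 1⟩ h
        rw [s19Gone] at this
        linarith
    obtain ⟨hmem, hG⟩ := P1 (Gfun g y) hz
    exact hanti.injOn hmem hy hG
  -- Ginv tends to 0 within Ioi 0
  have hGinv0 : Tendsto Ginv atTop (nhdsWithin 0 (Set.Ioi 0)) := by
    rw [tendsto_nhdsWithin_iff]
    constructor
    · rw [Metric.tendsto_nhds]
      intro ε hε
      set ε' : ℝ := min ε 1 with hε'def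
      have hε'Ioc : ε' ∈ Set.Ioc (0:ℝ) 1 := ⟨lt_min hε one_pos, min_le_right _ _⟩
      filter_upwards [eventually_gt_atTop (Gfun g ε'), eventually_ge_atTop 0] with z hz hz0
      obtain ⟨hmem, hGz⟩ := P1 z hz0
      rw [Real.dist_eq, sub_zero, abs_of_pos hmem.1]
      by_contra hcon
      push_neg at hcon
      have hcon' : ε' ≤ Ginv z := le_trans (min_le_left _ _) hcon
      have := hanti.antitoneOn hε'Ioc hmem hcon'
      rw [hGz] at this
      exact absurd this (not_le.mpr hz)
    · filter_upwards [eventually_ge_atTop 0] with z hz using Set.mem_Ioi.mpr (P1 z hz).1.1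
  -- (i)
  have hF1 : Tendsto (fun y => y * Real.log (Gfun g y) ^ (1/α))
      (nhdsWithin 0 (Set.Ioi 0)) (nhds 1) := by
    have hc : ContinuousAt (fun x : ℝ => x ^ (1/α)) 1 :=
      Real.continuousAt_rpow_const 1 _ (Or.inl one_ne_zero)
    have h := hc.tendsto.comp (s19L2 hα hgcont hgpos hgasy)
    rw [Real.one_rpow] at h
    refine h.congr' ?_
    filter_upwards [eventually_mem_nhdsWithin, hGtop.eventually_ge_atTop 1] with y hy hG
    have hy0 : (0:ℝ) < y := hy
    have hlog : 0 ≤ Real.log (Gfun g y) := Real.log_nonneg hG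
    show (y ^ α * Real.log (Gfun g y)) ^ (1/α) = y * Real.log (Gfun g y) ^ (1/α)
    rw [Real.mul_rpow (Real.rpow_nonneg hy0.le α) hlog, ← Real.rpow_mul hy0.le,
      mul_one_div_cancel hα.ne', Real.rpow_one]
  have hI : Tendsto (fun z => Ginv z * Real.log z ^ (1/α)) atTop (nhds 1) := by
    have h := hF1.comp hGinv0
    refine h.congr' ?_
    filter_upwards [eventually_ge_atTop 0] with z hz
    simp only [Function.comp]
    rw [(P1 z hz).2]
  -- (ii)
  have hRV0 : RVatTop Ginv 0 := by
    intro lam hlam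
    rw [Real.rpow_zero]
    have hmul : Tendsto (fun z : ℝ => lam * z) atTop atTop :=
      Tendsto.const_mul_atTop hlam tendsto_id
    have hIlam : Tendsto (fun z => Ginv (lam*z) * Real.log (lam*z) ^ (1/α)) atTop (nhds 1) :=
      hI.comp hmul
    have hquot : Tendsto (fun z =>
        (Ginv (lam*z) * Real.log (lam*z) ^ (1/α)) / (Ginv z * Real.log z ^ (1/α)))
        atTop (nhds 1) := by
      have := hIlam.div hI one_ne_zero
      rwa [div_one] at this
    have hlr := s19logratio hlam (1/α)
    have hlrinv : Tendsto (fun z => Real.log z ^ (1/α) / Real.log (lam*z) ^ (1/α))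
        atTop (nhds 1) := by
      have := hlr.inv₀ one_ne_zero
      simp only [inv_div, inv_one] at this
      exact this
    have hprod := hquot.mul hlrinv
    rw [mul_one] at hprod
    refine hprod.congr' ?_
    filter_upwards [eventually_ge_atTop 0, Real.tendsto_log_atTop.eventually_gt_atTop 0,
      (Real.tendsto_log_atTop.comp hmul).eventually_gt_atTop 0] with z hz hlz hllz
    have hGz : 0 < Ginv z := (P1 z hz).1.1
    have h1 : (0:ℝ) < Real.log z ^ (1/α) := Real.rpow_pos_of_pos hlz _
    have h2 : (0:ℝ) < Real.log (lam*z) ^ (1/α) := Real.rpow_pos_of_pos hllz _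
    field_simp
  -- (iii)
  have hF2 : Tendsto (fun y => g y * Gfun g y * Real.log (Gfun g y) ^ ((α+1)/α))
      (nhdsWithin 0 (Set.Ioi 0)) (nhds (1/α)) := by
    have A3 : Tendsto (fun y => (y ^ α * Real.log (Gfun g y)) ^ ((α+1)/α))
        (nhdsWithin 0 (Set.Ioi 0)) (nhds 1) := by
      have hc : ContinuousAt (fun x : ℝ => x ^ ((α+1)/α)) 1 :=
        Real.continuousAt_rpow_const 1 _ (Or.inl one_ne_zero)
      have h := hc.tendsto.comp (s19L2 hα hgcont hgpos hgasy)
      rwa [Real.one_rpow] at h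
    have hcomb : Tendsto (fun y =>
        (g y * Real.exp (1 / y ^ α)) * (Gfun g y * α / (y ^ (α+1) * Real.exp (1 / y ^ α)))
          * ((y ^ α * Real.log (Gfun g y)) ^ ((α+1)/α)) / α)
        (nhdsWithin 0 (Set.Ioi 0)) (nhds (1/α)) := by
      have := ((hgasy.mul (s19L1 hα hgcont hgpos hgasy)).mul A3).div_const α
      simpa using this
    have egen : ∀ a G E P L : ℝ, E ≠ 0 → P ≠ 0 →
        (a*E) * (G*α/(P*E)) * (P*L)/α = a*G*L := by
      intro a G E P L hE hP
      field_simp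
    refine hcomb.congr' ?_
    filter_upwards [eventually_mem_nhdsWithin, hGtop.eventually_ge_atTop 1] with y hy hG
    have hy0 : (0:ℝ) < y := hy
    have hlog : 0 ≤ Real.log (Gfun g y) := Real.log_nonneg hG
    have hsplit : (y ^ α * Real.log (Gfun g y)) ^ ((α+1)/α)
        = y ^ (α+1) * Real.log (Gfun g y) ^ ((α+1)/α) := by
      rw [Real.mul_rpow (Real.rpow_nonneg hy0.le α) hlog, ← Real.rpow_mul hy0.le]
      congr 2
      field_simp
    rw [hsplit, egen (g y) (Gfun g y) (Real.exp (1 / y ^ α)) (y ^ (α+1))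
      (Real.log (Gfun g y) ^ ((α+1)/α)) (Real.exp_ne_zero _)
      (Real.rpow_pos_of_pos hy0 _).ne']
  have hII : Tendsto (fun z => g (Ginv z) * z * Real.log z ^ ((α+1)/α))
      atTop (nhds (1/α)) := by
    have h := hF2.comp hGinv0
    refine h.congr' ?_
    filter_upwards [eventually_ge_atTop 0] with z hz
    simp only [Function.comp]
    rw [(P1 z hz).2]
  -- (iv)
  have hRV1 : RVatTop (fun z => g (Ginv z)) (-1) := by
    intro lam hlam
    rw [Real.rpow_neg_one]
    have hmul : Tendsto (fun z : ℝ => lam * z) atTop atTop :=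
      Tendsto.const_mul_atTop hlam tendsto_id
    have hIIlam : Tendsto (fun z => g (Ginv (lam*z)) * (lam*z) * Real.log (lam*z) ^ ((α+1)/α))
        atTop (nhds (1/α)) := hII.comp hmul
    have hquot : Tendsto (fun z =>
        (g (Ginv (lam*z)) * (lam*z) * Real.log (lam*z) ^ ((α+1)/α))
          / (g (Ginv z) * z * Real.log z ^ ((α+1)/α))) atTop (nhds 1) := by
      have := hIIlam.div hII (one_div_ne_zero hα.ne')
      rwa [div_self (one_div_ne_zero hα.ne')] at this
    have hlr := s19logratio hlam ((α+1)/α)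
    have hlrinv : Tendsto (fun z => Real.log z ^ ((α+1)/α) / Real.log (lam*z) ^ ((α+1)/α))
        atTop (nhds 1) := by
      have := hlr.inv₀ one_ne_zero
      simp only [inv_div, inv_one] at this
      exact this
    have hprod := (hquot.mul hlrinv).mul_const lam⁻¹
    rw [mul_one, one_mul] at hprod
    refine hprod.congr' ?_
    filter_upwards [eventually_ge_atTop 0, eventually_gt_atTop 0,
      Real.tendsto_log_atTop.eventually_gt_atTop 0,
      (Real.tendsto_log_atTop.comp hmul).eventually_gt_atTop 0] with z hz hz0 hlz hllz
    have hGz : 0 < g (Ginv z) := hgpos _ (P1 z hz).1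
    have h1 : (0:ℝ) < Real.log z ^ ((α+1)/α) := Real.rpow_pos_of_pos hlz _
    have h2 : (0:ℝ) < Real.log (lam*z) ^ ((α+1)/α) := Real.rpow_pos_of_pos hllz _
    field_simp
  exact ⟨hanti, s19Gone, hGtop, Ginv, P1, P2, hI, hRV0, hII, hRV1⟩
end
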